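/- arXiv:2604.14769 — 6 statements merged into one kernel-verified Lean document; each statement's English description precedes it below -/
import Mathlib

section
/- Every matrix of rank at most N in the rearranged space arises from a Kronecker decomposition: for any matrix M ∈ ℝ^{(L·B)×A} with rank(M) ≤ N, there exist templates T₁, …, T_N ∈ ℝ^{1×A} and scalers S₁, …, S_N ∈ ℝ^{L×B} such that R(Σ_{i=1}^{N} T_i ⊗ S_i) = M. -/
open Matrix

noncomputable section

/-- Pair-index encoding `(i, j) ↦ j + n·i`, the zero-based form of `(i−1)·n + j`. -/
def pairIdx {m n : ℕ} (i : Fin m) (j : Fin n) : Fin (m * n) := finProdFinEquiv (i, j)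

/-- The rearrangement operator `R : ℝ^{L×(A·B)} → ℝ^{(L·B)×A}` defined entrywise by
`R(W)_{(ℓ−1)B+b, a} = W_{ℓ, (a−1)B+b}`. -/
def rearrange (L A B : ℕ) (W : Matrix (Fin L) (Fin (A * B)) ℝ) :
    Matrix (Fin (L * B)) (Fin A) ℝ := fun r a =>
  W (finProdFinEquiv.symm r).1 (pairIdx a (finProdFinEquiv.symm r).2)

/-- The Kronecker product of a row template `T ∈ ℝ^{1×A}` with a scaler `S ∈ ℝ^{L×B}`:
`(T ⊗ S)_{ℓ, (a−1)B+b} = T_{1,a} · S_{ℓ,b}`. -/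
def kron {L A B : ℕ} (T : Matrix (Fin 1) (Fin A) ℝ) (S : Matrix (Fin L) (Fin B) ℝ) :
    Matrix (Fin L) (Fin (A * B)) ℝ := fun ℓ c =>
  T 0 (finProdFinEquiv.symm c).1 * S ℓ (finProdFinEquiv.symm c).2

/-- The Frobenius norm `‖M‖_F = (Σ_{i,j} M_{ij}²)^{1/2}`. -/
def frobNorm {m n : ℕ} (M : Matrix (Fin m) (Fin n) ℝ) : ℝ :=
  Real.sqrt (∑ i, ∑ j, (M i j) ^ 2)

/-- every matrix of rank at most `N` in the rearranged space arises from an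
`N`-term Kronecker decomposition. -/
theorem exists_kron_decomposition_of_rank_le (L A B N : ℕ) (hL : 0 < L) (hA : 0 < A)
    (hB : 0 < B) (hN : 0 < N) (M : Matrix (Fin (L * B)) (Fin A) ℝ) (hM : M.rank ≤ N) :
    ∃ (T : Fin N → Matrix (Fin 1) (Fin A) ℝ) (S : Fin N → Matrix (Fin L) (Fin B) ℝ),
      rearrange L A B (∑ i, kron (T i) (S i)) = M := by
  classical
  set V : Submodule ℝ (Fin (L*B) → ℝ) := Submodule.span ℝ (Set.range Mᵀ) with hV
  have hfin : Module.finrank ℝ V ≤ N := by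
    rw [show V = Submodule.span ℝ (Set.range M.col) from rfl, ← Matrix.rank_eq_finrank_span_cols]; exact hM
  set k := Module.finrank ℝ V with hk
  let b : Module.Basis (Fin k) ℝ V := Module.finBasis ℝ V
  let u : Fin N → (Fin (L*B) → ℝ) := fun i =>
    if h : (i : ℕ) < k then (b ⟨i, h⟩ : Fin (L*B) → ℝ) else 0
  have hspan : ∀ a : Fin A, Mᵀ a ∈ Submodule.span ℝ (Set.range u) := by
    intro a
    have hmem : Mᵀ a ∈ V := Submodule.subset_span ⟨a, rfl⟩
    have hx : (⟨Mᵀ a, hmem⟩ : V) = ∑ j : Fin k, b.repr ⟨Mᵀ a, hmem⟩ j • b j :=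
      (b.sum_repr _).symm
    have : Mᵀ a = ∑ j : Fin k, b.repr ⟨Mᵀ a, hmem⟩ j • (b j : Fin (L*B) → ℝ) := by
      have := congrArg (Subtype.val) hx
      simpa only [Submodule.coe_sum, Submodule.coe_smul] using this
    rw [this]
    refine Submodule.sum_mem _ fun j _ => Submodule.smul_mem _ _ ?_
    apply Submodule.subset_span
    refine ⟨Fin.castLE hfin j, ?_⟩
    simp only [u, Fin.coe_castLE, j.isLt, dif_pos]
  have hcoef : ∀ a : Fin A, ∃ c : Fin N → ℝ, ∑ i, c i • u i = Mᵀ a := fun a =>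
    (Submodule.mem_span_range_iff_exists_fun ℝ).mp (hspan a)
  choose w hw using hcoef
  refine ⟨fun i => fun _ a => w a i, fun i => fun ℓ bb => u i (finProdFinEquiv (ℓ, bb)), ?_⟩
  ext r a
  have key : ∑ i, w a i • u i = Mᵀ a := hw a
  have := congrFun key r
  simp only [Finset.sum_apply, Pi.smul_apply, smul_eq_mul] at this
  simp only [rearrange, Matrix.sum_apply, kron, pairIdx, Equiv.symm_apply_apply,
    Equiv.apply_symm_apply]
  have hr : finProdFinEquiv ((finProdFinEquiv.symm r).1, (finProdFinEquiv.symm r).2) = r := finProdFinEquiv.apply_symm_apply r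
  rw [hr]
  simpa [Matrix.transpose_apply, mul_comm] using this
end
end

section
/- (Lemma: Truncated Singular Value Bound of Kronecker Decomposition) For any matrix W ∈ ℝ^{L×P}, the minimum squared Frobenius reconstruction error over all N-term Kronecker decompositions equals the sum of the squared truncated singular values of the rearranged matrix: min over all templates T₁, …, T_N ∈ ℝ^{1×A} and scalers S₁, …, S_N ∈ ℝ^{L×B} of ‖W − Σ_{i=1}^{N} T_i ⊗ S_i‖_F² equals Σ_{j=N+1}^{min(L·B, A)} σ_j(R(W))², where σ_j denotes the j-th largest singular value. -/
open Matrix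

noncomputable section

/-- `svals M j` is the `j`-th largest singular value (1-based index `j`) of the real
matrix `M`: the square root of the `j`-th largest eigenvalue of `MᵀM`. -/
def svals {m n : ℕ} (M : Matrix (Fin m) (Fin n) ℝ) : ℕ → ℝ := fun j =>
  Real.sqrt
    ((((List.ofFn
        ((show (Mᵀ * M).IsHermitian by
            rw [← Matrix.conjTranspose_eq_transpose_of_trivial]
            exact Matrix.isHermitian_conjTranspose_mul_self M).eigenvalues)).insertionSort
        (· ≤ ·)).reverse).getD (j - 1) 0)


namespace EY

/-! ### Generic helper lemmas -/

lemma expand_sq {n k : ℕ} (u : Fin n → ℝ) (w : Fin k → Fin n → ℝ)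
    (hw : ∀ i i', w i ⬝ᵥ w i' = if i = i' then 1 else 0)
    (β : Fin k → ℝ) :
    ∑ a, (u a - ∑ i, β i * w i a) ^ 2 =
      u ⬝ᵥ u - ∑ i, (u ⬝ᵥ w i) ^ 2 + ∑ i, (β i - u ⬝ᵥ w i) ^ 2 := by
  have h1 : ∑ a, (u a - ∑ i, β i * w i a) ^ 2
      = ∑ a, (u a * u a) - 2 * ∑ i, β i * (u ⬝ᵥ w i)
        + ∑ i, ∑ i', β i * β i' * (w i ⬝ᵥ w i') := by
    have expand : ∀ a : Fin n, (u a - ∑ i, β i * w i a) ^ 2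
        = u a * u a - 2 * ∑ i, β i * (u a * w i a)
          + ∑ i, ∑ i', β i * β i' * (w i a * w i' a) := by
      intro a
      have e1 : ∑ i, β i * (u a * w i a) = u a * ∑ i, β i * w i a := by
        rw [Finset.mul_sum]; apply Finset.sum_congr rfl; intros; ring
      have e2 : ∑ i, ∑ i', β i * β i' * (w i a * w i' a)
          = (∑ i, β i * w i a) * (∑ i', β i' * w i' a) := by
        rw [Finset.sum_mul_sum]
        apply Finset.sum_congr rfl; intros; apply Finset.sum_congr rfl; intros; ring
      rw [e1, e2]; ring
    rw [Finset.sum_congr rfl fun a _ => expand a]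
    rw [Finset.sum_add_distrib, Finset.sum_sub_distrib]
    congr 1
    · congr 1
      rw [← Finset.mul_sum, Finset.sum_comm]
      congr 1
      apply Finset.sum_congr rfl; intro i _
      rw [← Finset.mul_sum]; rfl
    · rw [Finset.sum_comm]
      apply Finset.sum_congr rfl; intro i _
      rw [Finset.sum_comm]
      apply Finset.sum_congr rfl; intro i' _
      rw [← Finset.mul_sum]; rfl
  have h2 : ∑ i, ∑ i', β i * β i' * (w i ⬝ᵥ w i') = ∑ i, β i * β i := by
    apply Finset.sum_congr rfl; intro i _
    rw [Finset.sum_eq_single i]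
    · rw [hw i i]; simp
    · intro i' _ hne; rw [hw i i']; simp [Ne.symm hne]
    · simp
  have h3 : ∑ i, (β i - u ⬝ᵥ w i) ^ 2
      = ∑ i, β i * β i - 2 * ∑ i, β i * (u ⬝ᵥ w i) + ∑ i, (u ⬝ᵥ w i) ^ 2 := by
    have e : ∀ i : Fin k, (β i - u ⬝ᵥ w i) ^ 2
        = (β i * β i - 2 * (β i * (u ⬝ᵥ w i))) + (u ⬝ᵥ w i) ^ 2 := fun i => by ring
    rw [Finset.sum_congr rfl fun i _ => e i, Finset.sum_add_distrib, Finset.sum_sub_distrib,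
      ← Finset.mul_sum]
  have h4 : ∑ a, u a * u a = u ⬝ᵥ u := rfl
  rw [h1, h2, h3, h4]; ring

lemma knapsack (f c : ℕ → ℝ) (n N : ℕ) (hf0 : ∀ j, 0 ≤ f j)
    (hanti : ∀ ⦃i j : ℕ⦄, i ≤ j → f j ≤ f i) (hc0 : ∀ j, 0 ≤ c j) (hc1 : ∀ j, c j ≤ 1)
    (hcs : ∑ j ∈ Finset.range n, c j ≤ N) :
    ∑ j ∈ Finset.range n, f j * c j ≤ ∑ j ∈ Finset.range (min N n), f j := by
  rcases le_or_gt n N with h | h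
  · rw [min_eq_right h]
    exact Finset.sum_le_sum fun j _ => mul_le_of_le_one_right (hf0 j) (hc1 j)
  · rw [min_eq_left h.le]
    have hsub : Finset.range N ⊆ Finset.range n := Finset.range_subset_range.mpr h.le
    have e2 : ∑ j ∈ Finset.range n \ Finset.range N, f j * c j
          + ∑ j ∈ Finset.range N, f j * c j
        = ∑ j ∈ Finset.range n, f j * c j := Finset.sum_sdiff hsub
    have e3 : ∑ j ∈ Finset.range n \ Finset.range N, c j + ∑ j ∈ Finset.range N, c j
        = ∑ j ∈ Finset.range n, c j := Finset.sum_sdiff hsub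
    have b1 : ∑ j ∈ Finset.range N, (f j * c j - f j)
        ≤ ∑ j ∈ Finset.range N, f N * (c j - 1) := by
      apply Finset.sum_le_sum
      intro j hj
      have h1 : f N ≤ f j := hanti (Finset.mem_range.mp hj).le
      nlinarith [hc1 j, hc0 j]
    have b2 : ∑ j ∈ Finset.range n \ Finset.range N, f j * c j
        ≤ ∑ j ∈ Finset.range n \ Finset.range N, f N * c j := by
      apply Finset.sum_le_sum
      intro j hj
      simp only [Finset.mem_sdiff, Finset.mem_range] at hj
      exact mul_le_mul_of_nonneg_right (hanti (le_of_not_gt hj.2)) (hc0 j)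
    have b3 : ∑ j ∈ Finset.range N, (f j * c j - f j)
        = ∑ j ∈ Finset.range N, f j * c j - ∑ j ∈ Finset.range N, f j :=
      Finset.sum_sub_distrib _ _
    have b4 : ∑ j ∈ Finset.range N, f N * (c j - 1) = f N * (∑ j ∈ Finset.range N, c j - N) := by
      rw [← Finset.mul_sum]
      congr 1
      rw [Finset.sum_sub_distrib]
      simp
    have b5 : ∑ j ∈ Finset.range n \ Finset.range N, f N * c j
        = f N * ∑ j ∈ Finset.range n \ Finset.range N, c j := by
      rw [Finset.mul_sum]
    have hfN : 0 ≤ f N := hf0 N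
    nlinarith [hfN, e2, e3]

lemma exists_onb {N n : ℕ} (Dv : Fin N → (Fin n → ℝ)) :
    ∃ k, k ≤ N ∧ ∃ Q : Fin k → (Fin n → ℝ),
      (∀ i i', Q i ⬝ᵥ Q i' = if i = i' then 1 else 0) ∧
      (∀ i₀, ∃ β : Fin k → ℝ, ∀ a, Dv i₀ a = ∑ i, β i * Q i a) := by
  classical
  set E := EuclideanSpace ℝ (Fin n) with hE
  let tE : (Fin n → ℝ) ≃ₗ[ℝ] E := (WithLp.linearEquiv 2 ℝ (Fin n → ℝ)).symm
  set Sp : Submodule ℝ E := Submodule.span ℝ (Set.range fun i => tE (Dv i)) with hSp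
  haveI : FiniteDimensional ℝ Sp := FiniteDimensional.span_of_finite ℝ (Set.finite_range _)
  set k := Module.finrank ℝ Sp with hk
  have hkN : k ≤ N := by
    have h1 : k ≤ (Set.range fun i => tE (Dv i)).toFinset.card := by
      simpa using finrank_span_le_card (R := ℝ) (Set.range fun i => tE (Dv i))
    refine h1.trans ?_
    rw [Set.toFinset_range]
    exact (Finset.card_image_le).trans (by simp)
  let b := stdOrthonormalBasis ℝ Sp
  have hinner : ∀ (x y : Sp), (inner ℝ x y : ℝ) = (∑ a, (x : E) a * (y : E) a) := by
    intro x y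
    rw [Submodule.coe_inner]
    rw [PiLp.inner_apply]
    simp [RCLike.inner_apply, starRingEnd_apply]
    exact Finset.sum_congr rfl fun _ _ => mul_comm _ _
  refine ⟨k, hkN, fun i a => (b i : E) a, ?_, ?_⟩
  · intro i i'
    have horm := b.orthonormal
    rw [orthonormal_iff_ite] at horm
    have h2 := horm i i'
    rw [hinner] at h2
    simpa [dotProduct] using h2
  · intro i₀
    have hmem : tE (Dv i₀) ∈ Sp := Submodule.subset_span ⟨i₀, rfl⟩
    set x : Sp := ⟨tE (Dv i₀), hmem⟩ with hx
    have hrepr := b.sum_repr x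
    refine ⟨fun i => b.repr x i, fun a => ?_⟩
    have hcoe : ((∑ i, b.repr x i • b i : Sp) : E) = ∑ i, b.repr x i • (b i : E) := by
      push_cast
      rfl
    have heq : tE (Dv i₀) = ∑ i, b.repr x i • (b i : E) := by
      rw [← hcoe, hrepr]
    have happ : Dv i₀ = tE.symm (∑ i, b.repr x i • (b i : E)) := by
      rw [← heq]; simp
    rw [happ]
    rw [map_sum]
    simp only [_root_.map_smul]
    rw [Finset.sum_apply]
    rfl

lemma sum_dite_pad {k N : ℕ} (h : k ≤ N) (u : Fin k → ℝ) :
    ∑ i : Fin N, (if hh : (i : ℕ) < k then u ⟨i, hh⟩ else 0) = ∑ i, u i := by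
  rw [Fin.sum_univ_eq_sum_range (fun i => if hh : i < k then u ⟨i, hh⟩ else 0) N]
  have step : ∑ i ∈ Finset.range k, (if hh : i < k then u ⟨i, hh⟩ else 0) = ∑ i, u i := by
    rw [← Fin.sum_univ_eq_sum_range]
    exact Finset.sum_congr rfl fun i _ => dif_pos i.2
  rw [← step]
  symm
  apply Finset.sum_subset (Finset.range_subset_range.mpr h)
  intro x hx hx2
  simp only [Finset.mem_range] at hx2
  rw [dif_neg hx2]

/-! ### Spectral data of `Xᵀ * X` -/

section Core

variable {m n : ℕ} (X : Matrix (Fin m) (Fin n) ℝ)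

def hG : (Xᵀ * X).IsHermitian := by
  rw [← Matrix.conjTranspose_eq_transpose_of_trivial]
  exact Matrix.isHermitian_conjTranspose_mul_self X

def ev : Fin n → ℝ := (hG X).eigenvalues

def V : Fin n → (Fin n → ℝ) := fun j => ⇑((hG X).eigenvectorBasis j)

lemma star_mul_eq : (star ((hG X).eigenvectorUnitary : Matrix (Fin n) (Fin n) ℝ)) *
    ((hG X).eigenvectorUnitary : Matrix (Fin n) (Fin n) ℝ) = 1 :=
  Matrix.UnitaryGroup.star_mul_self _

lemma mul_star_eq : ((hG X).eigenvectorUnitary : Matrix (Fin n) (Fin n) ℝ) *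
    (star ((hG X).eigenvectorUnitary : Matrix (Fin n) (Fin n) ℝ)) = 1 := by
  have h := Matrix.UnitaryGroup.star_mul_self ((hG X).eigenvectorUnitary)
  have h2 := mul_eq_one_comm.mp h
  simpa using h2

lemma V_orth (j j' : Fin n) : V X j ⬝ᵥ V X j' = if j = j' then 1 else 0 := by
  have h := congrFun (congrFun (star_mul_eq X) j) j'
  simp only [Matrix.mul_apply, Matrix.star_apply, star_trivial,
    Matrix.IsHermitian.eigenvectorUnitary_apply, Matrix.one_apply] at h
  simpa [dotProduct, V] using h

lemma V_rows (a b : Fin n) : ∑ j, V X j a * V X j b = if a = b then 1 else 0 := by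
  have h := congrFun (congrFun (mul_star_eq X) a) b
  simp only [Matrix.mul_apply, Matrix.star_apply, star_trivial,
    Matrix.IsHermitian.eigenvectorUnitary_apply, Matrix.one_apply] at h
  simpa [V] using h

lemma G_apply (a b : Fin n) : (Xᵀ * X) a b = ∑ j, ev X j * (V X j a * V X j b) := by
  conv_lhs => rw [(hG X).spectral_theorem, Unitary.conjStarAlgAut_apply]
  simp only [Matrix.mul_apply, Matrix.diagonal_apply, Matrix.star_apply, star_trivial,
    Matrix.IsHermitian.eigenvectorUnitary_apply, Function.comp_apply]
  simp only [mul_ite, mul_zero, Finset.sum_ite_eq, Finset.sum_ite_eq', Finset.mem_univ, if_true]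
  apply Finset.sum_congr rfl; intro j _
  simp only [V, ev, RCLike.ofReal_real_eq_id, id_eq]
  ring

lemma QF (q : Fin n → ℝ) : ∑ r, (X r ⬝ᵥ q) ^ 2 = ∑ j, ev X j * (V X j ⬝ᵥ q) ^ 2 := by
  have lhs : ∑ r, (X r ⬝ᵥ q) ^ 2 = ∑ a, ∑ b, (q a * q b) * (Xᵀ * X) a b := by
    simp only [dotProduct, Matrix.mul_apply, Matrix.transpose_apply, sq]
    rw [Finset.sum_comm]
    simp only [Finset.sum_mul_sum]
    rw [Finset.sum_comm]
    apply Finset.sum_congr rfl; intro a _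
    rw [Finset.sum_comm]
    apply Finset.sum_congr rfl; intro b _
    rw [Finset.mul_sum]
    apply Finset.sum_congr rfl; intro r _
    ring
  rw [lhs]
  have rhs : ∀ a, ∑ b, (q a * q b) * (Xᵀ * X) a b
      = ∑ j, ev X j * (q a * V X j a) * (V X j ⬝ᵥ q) := by
    intro a
    simp only [G_apply X, Finset.mul_sum, dotProduct]
    rw [Finset.sum_comm]
    apply Finset.sum_congr rfl; intro j _
    apply Finset.sum_congr rfl; intro b _
    ring
  rw [Finset.sum_congr rfl fun a _ => rhs a, Finset.sum_comm]
  apply Finset.sum_congr rfl; intro j _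
  rw [← Finset.sum_mul]
  rw [show ∑ a, ev X j * (q a * V X j a) = ev X j * ∑ a, V X j a * q a by
    rw [Finset.mul_sum]; exact Finset.sum_congr rfl fun a _ => by ring]
  simp only [dotProduct, sq]
  ring

lemma parseval (u : Fin n → ℝ) : ∑ j, (u ⬝ᵥ V X j) ^ 2 = u ⬝ᵥ u := by
  simp only [dotProduct, sq, Finset.sum_mul_sum]
  rw [Finset.sum_comm]
  have h : ∀ a, ∑ j, ∑ b, u a * V X j a * (u b * V X j b)
      = ∑ b, (u a * u b) * ∑ j, V X j a * V X j b := by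
    intro a
    rw [Finset.sum_comm]
    apply Finset.sum_congr rfl; intro b _
    rw [Finset.mul_sum]
    apply Finset.sum_congr rfl; intro j _
    ring
  rw [Finset.sum_congr rfl fun a _ => h a]
  apply Finset.sum_congr rfl; intro a _
  simp only [V_rows X, mul_ite, mul_one, mul_zero, Finset.sum_ite_eq, Finset.mem_univ, if_true]

lemma ev_nonneg (j : Fin n) : 0 ≤ ev X j := by
  have h : (Xᵀ * X).PosSemidef := by
    have h2 := Matrix.posSemidef_conjTranspose_mul_self X
    rwa [Matrix.conjTranspose_eq_transpose_of_trivial] at h2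
  exact h.eigenvalues_nonneg j

lemma sum_ev : ∑ r, X r ⬝ᵥ X r = ∑ j, ev X j := by
  have h1 : ∀ r, X r ⬝ᵥ X r = ∑ j, (X r ⬝ᵥ V X j) ^ 2 := fun r => (parseval X (X r)).symm
  rw [Finset.sum_congr rfl fun r _ => h1 r, Finset.sum_comm]
  apply Finset.sum_congr rfl; intro j _
  rw [QF X (V X j)]
  rw [Finset.sum_eq_single j]
  · rw [V_orth X j j]; simp
  · intro j' _ hne
    rw [V_orth X j' j]; simp [hne]
  · simp

lemma card_ne_zero_le : Fintype.card {j // ev X j ≠ 0} ≤ m := by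
  have h1 : (Xᵀ * X).rank = Fintype.card {j // ev X j ≠ 0} :=
    (hG X).rank_eq_card_non_zero_eigs
  rw [← h1]
  calc (Xᵀ * X).rank ≤ Xᵀ.rank := Matrix.rank_mul_le_left _ _
  _ ≤ Fintype.card (Fin m) := Matrix.rank_le_card_width _
  _ = m := Fintype.card_fin m

end Core

/-! ### Decreasing rearrangement of a tuple -/

section Sorted

variable {n m : ℕ} (lam : Fin n → ℝ)

def spe : Equiv.Perm (Fin n) := (Fin.revPerm).trans (Tuple.sort lam)

def fv : ℕ → ℝ := fun j => (((List.ofFn lam).insertionSort (· ≤ ·)).reverse).getD j 0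

lemma sortEq : (List.ofFn lam).insertionSort (· ≤ ·) = List.ofFn (lam ∘ Tuple.sort lam) := by
  refine (fun h1 h2 h3 => List.Perm.eq_of_pairwise' (r := (· ≤ ·)) h2 h3 h1) ?_ ?_ ?_
  · refine ((List.perm_insertionSort _ _).trans ?_)
    symm
    rw [← List.map_ofFn]
    have hf : List.ofFn lam = List.map lam (List.finRange n) := List.ofFn_eq_map
    rw [hf]
    refine List.Perm.map _ ?_
    apply List.perm_of_nodup_nodup_toFinset_eq
    · exact List.nodup_ofFn.mpr (Tuple.sort lam).injective
    · exact List.nodup_finRange n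
    · ext x; simp [List.mem_ofFn]
      exact (Tuple.sort lam).surjective x
  · exact List.pairwise_insertionSort _ _
  · rw [← List.sortedLE_iff_pairwise, List.sortedLE_ofFn_iff]
    exact Tuple.monotone_sort lam

lemma fv_eq (j : ℕ) (h : j < n) : fv lam j = lam (spe lam ⟨j, h⟩) := by
  unfold fv
  rw [sortEq]
  have hlen : j < (List.ofFn (lam ∘ Tuple.sort lam)).reverse.length := by simp [h]
  rw [List.getD_eq_getElem _ _ hlen]
  simp only [List.getElem_reverse, List.getElem_ofFn, Function.comp_apply]
  unfold spe
  simp only [Equiv.trans_apply]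
  apply congrArg; apply congrArg
  apply Fin.ext
  simp [Fin.rev]
  omega

lemma fv_eq_zero (j : ℕ) (h : n ≤ j) : fv lam j = 0 := by
  unfold fv
  apply List.getD_eq_default
  simpa using h

lemma fv_nonneg (hnn : ∀ i, 0 ≤ lam i) (j : ℕ) : 0 ≤ fv lam j := by
  rcases lt_or_ge j n with h | h
  · rw [fv_eq lam j h]; exact hnn _
  · rw [fv_eq_zero lam j h]

lemma fv_anti (hnn : ∀ i, 0 ≤ lam i) : ∀ ⦃i j : ℕ⦄, i ≤ j → fv lam j ≤ fv lam i := by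
  intro i j hij
  rcases lt_or_ge j n with hj | hj
  · have hi : i < n := lt_of_le_of_lt hij hj
    rw [fv_eq lam j hj, fv_eq lam i hi]
    unfold spe
    simp only [Equiv.trans_apply]
    apply Tuple.monotone_sort lam
    simp [Fin.le_def, Fin.rev]
    omega
  · rw [fv_eq_zero lam j hj]
    exact fv_nonneg lam hnn i

lemma fv_sum : ∑ j ∈ Finset.range n, fv lam j = ∑ i, lam i := by
  rw [← Fin.sum_univ_eq_sum_range (fun j => fv lam j) n]
  rw [Finset.sum_congr rfl (fun (i : Fin n) _ => by
    rw [fv_eq lam i i.2])]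
  exact Equiv.sum_comp (spe lam) lam

lemma fv_tail (hnn : ∀ i, 0 ≤ lam i) (hcard : Fintype.card {i // lam i ≠ 0} ≤ m)
    (j : ℕ) (hm : m ≤ j) : fv lam j = 0 := by
  rcases lt_or_ge j n with hj | hj
  · by_contra hne
    have hpos : 0 < fv lam j := lt_of_le_of_ne (fv_nonneg lam hnn j) (Ne.symm hne)
    have hinj : Function.Injective
        (fun t : Fin (j+1) => spe lam ⟨t, lt_of_lt_of_le t.2 hj⟩) := by
      intro t t' h
      have h2 := (spe lam).injective h
      have h3 := Fin.mk.injEq .. ▸ h2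
      exact Fin.ext (by simpa using h3)
    have hal : ∀ t : Fin (j+1), lam (spe lam ⟨t, lt_of_lt_of_le t.2 hj⟩) ≠ 0 := by
      intro t
      have h1 : fv lam j ≤ fv lam t := fv_anti lam hnn (Nat.lt_succ_iff.mp t.2)
      have h2 : fv lam t = lam (spe lam ⟨t, lt_of_lt_of_le t.2 hj⟩) := fv_eq lam t _
      rw [h2] at h1
      exact ne_of_gt (lt_of_lt_of_le hpos h1)
    have hcard2 : Fintype.card (Fin (j+1)) ≤ Fintype.card {i // lam i ≠ 0} := by
      apply Fintype.card_le_of_injective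
        (fun t => ⟨spe lam ⟨t, lt_of_lt_of_le t.2 hj⟩, hal t⟩)
      intro t t' h
      exact hinj (congrArg Subtype.val h)
    simp only [Fintype.card_fin] at hcard2
    omega
  · exact fv_eq_zero lam j hj

lemma sum_reindex (c : Fin n → ℝ) :
    ∑ i, lam i * c i =
      ∑ j ∈ Finset.range n, fv lam j * (if h : j < n then c (spe lam ⟨j, h⟩) else 0) := by
  rw [← Fin.sum_univ_eq_sum_range
    (fun j => fv lam j * (if h : j < n then c (spe lam ⟨j, h⟩) else 0)) n]
  rw [← Equiv.sum_comp (spe lam) (fun i => lam i * c i)]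
  apply Finset.sum_congr rfl; intro i _
  rw [fv_eq lam i i.2]
  simp

end Sorted


/-! ### Core Eckart–Young -/

section CoreThm

variable {m n : ℕ} (X : Matrix (Fin m) (Fin n) ℝ)

theorem core_lb (N : ℕ) (C : Matrix (Fin m) (Fin N) ℝ) (D : Matrix (Fin N) (Fin n) ℝ) :
    ∑ j ∈ Finset.Ico (min N n) n, fv (ev X) j ≤ ∑ r, ∑ a, ((X - C * D) r a) ^ 2 := by
  classical
  obtain ⟨k', hk', Q, hQ, hspan⟩ := exists_onb (fun i => D i)
  choose β hβ using hspan
  set γ : Fin m → Fin k' → ℝ := fun r i => ∑ i₀, C r i₀ * β i₀ i with hγ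
  have hrow : ∀ r a, (C * D) r a = ∑ i, γ r i * Q i a := by
    intro r a
    rw [Matrix.mul_apply]
    have h1 : ∀ i₀, C r i₀ * D i₀ a = ∑ i, C r i₀ * β i₀ i * Q i a := by
      intro i₀
      rw [hβ i₀ a, Finset.mul_sum]
      apply Finset.sum_congr rfl; intros; ring
    rw [Finset.sum_congr rfl fun i₀ _ => h1 i₀, Finset.sum_comm]
    apply Finset.sum_congr rfl; intro i _
    rw [hγ]
    simp only []
    rw [Finset.sum_mul]
  have hper : ∀ r, ∑ a, ((X - C * D) r a) ^ 2
      ≥ X r ⬝ᵥ X r - ∑ i, (X r ⬝ᵥ Q i) ^ 2 := by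
    intro r
    have h2 : ∀ a, (X - C * D) r a = X r a - ∑ i, γ r i * Q i a := by
      intro a
      rw [Matrix.sub_apply, hrow]
    rw [Finset.sum_congr rfl fun a _ => congrArg (· ^ 2) (h2 a)]
    rw [expand_sq (X r) Q hQ (γ r)]
    have h3 : 0 ≤ ∑ i, (γ r i - X r ⬝ᵥ Q i) ^ 2 :=
      Finset.sum_nonneg fun i _ => sq_nonneg _
    linarith
  have hQF : ∀ i, ∑ r, (X r ⬝ᵥ Q i) ^ 2 = ∑ j, ev X j * (V X j ⬝ᵥ Q i) ^ 2 :=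
    fun i => QF X (Q i)
  set c : Fin n → ℝ := fun j => ∑ i, (V X j ⬝ᵥ Q i) ^ 2 with hc
  have hc0 : ∀ j, 0 ≤ c j := fun j => Finset.sum_nonneg fun i _ => sq_nonneg _
  have hc1 : ∀ j, c j ≤ 1 := by
    intro j
    have h4 := expand_sq (V X j) Q hQ (fun i => V X j ⬝ᵥ Q i)
    simp only [sub_self, zero_pow, Finset.sum_const_zero, add_zero, OfNat.ofNat_ne_zero,
      ne_eq, not_false_iff] at h4
    have h5 : (0:ℝ) ≤ ∑ a, (V X j a - ∑ i, (V X j ⬝ᵥ Q i) * Q i a) ^ 2 :=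
      Finset.sum_nonneg fun a _ => sq_nonneg _
    rw [h4] at h5
    have h6 : V X j ⬝ᵥ V X j = 1 := by rw [V_orth X j j]; simp
    simp only [h6] at h5
    simp only [hc]
    linarith
  have hcs : ∑ j, c j ≤ (N:ℝ) := by
    have h8 : ∑ j, c j = ∑ i : Fin k', (Q i ⬝ᵥ Q i) := by
      rw [Finset.sum_comm]
      apply Finset.sum_congr rfl; intro i _
      rw [← parseval X (Q i)]
      apply Finset.sum_congr rfl; intro j _
      rw [dotProduct_comm]
    rw [h8]
    have h9 : ∀ i : Fin k', Q i ⬝ᵥ Q i = 1 := fun i => by rw [hQ i i]; simp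
    rw [Finset.sum_congr rfl fun i _ => h9 i]
    simp only [Finset.sum_const, Finset.card_univ, Fintype.card_fin, nsmul_eq_mul, mul_one]
    exact_mod_cast hk'.trans (le_refl N)
  -- assemble
  have main : ∑ r, ∑ a, ((X - C * D) r a) ^ 2
      ≥ ∑ j, ev X j - ∑ j, ev X j * c j := by
    have h10 : ∑ r, (X r ⬝ᵥ X r - ∑ i, (X r ⬝ᵥ Q i) ^ 2)
        = ∑ j, ev X j - ∑ j, ev X j * c j := by
      rw [Finset.sum_sub_distrib, sum_ev]
      congr 1
      rw [Finset.sum_comm]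
      rw [Finset.sum_congr rfl fun i (_ : i ∈ Finset.univ) => hQF i, Finset.sum_comm]
      apply Finset.sum_congr rfl; intro j _
      rw [hc]
      simp only []
      rw [Finset.mul_sum]
    calc ∑ r, ∑ a, ((X - C * D) r a) ^ 2
        ≥ ∑ r, (X r ⬝ᵥ X r - ∑ i, (X r ⬝ᵥ Q i) ^ 2) := Finset.sum_le_sum fun r _ => hper r
    _ = ∑ j, ev X j - ∑ j, ev X j * c j := h10
  have hknap : ∑ j, ev X j * c j ≤ ∑ j ∈ Finset.range (min N n), fv (ev X) j := by
    rw [sum_reindex (ev X) c]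
    apply knapsack _ _ n N (fv_nonneg (ev X) (ev_nonneg X))
      (fv_anti (ev X) (ev_nonneg X))
    · intro j
      split
      · exact hc0 _
      · exact le_refl 0
    · intro j
      split
      · exact hc1 _
      · exact zero_le_one
    · rw [← Fin.sum_univ_eq_sum_range (fun j => if h : j < n then c (spe (ev X) ⟨j, h⟩) else 0) n]
      rw [Finset.sum_congr rfl (fun (i : Fin n) _ => dif_pos i.2)]
      calc ∑ i : Fin n, c (spe (ev X) ⟨(i:ℕ), i.2⟩) = ∑ i : Fin n, c (spe (ev X) i) := by
            apply Finset.sum_congr rfl; intro i _; congr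
      _ = ∑ j, c j := Equiv.sum_comp (spe (ev X)) c
      _ ≤ N := hcs
  have hfinal : ∑ j ∈ Finset.Ico (min N n) n, fv (ev X) j
      = ∑ j ∈ Finset.range n, fv (ev X) j - ∑ j ∈ Finset.range (min N n), fv (ev X) j := by
    rw [Finset.sum_Ico_eq_sub _ (min_le_right N n)]
  rw [hfinal, fv_sum]
  linarith [main, hknap]

end CoreThm


section CoreThm2

variable {m n : ℕ} (X : Matrix (Fin m) (Fin n) ℝ)

theorem core_mem (N : ℕ) :
    ∃ (C : Matrix (Fin m) (Fin N) ℝ) (D : Matrix (Fin N) (Fin n) ℝ),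
      ∑ r, ∑ a, ((X - C * D) r a) ^ 2 = ∑ j ∈ Finset.Ico (min N n) n, fv (ev X) j := by
  classical
  set k := min N n with hkdef
  have hkN : k ≤ N := min_le_left N n
  have hkn : k ≤ n := min_le_right N n
  set emb : Fin k → Fin n := fun i => spe (ev X) ⟨i, lt_of_lt_of_le i.2 hkn⟩ with hemb
  have hembinj : Function.Injective emb := by
    intro t t' h
    have h2 := (spe (ev X)).injective h
    exact Fin.ext (by simpa using congrArg Fin.val h2)
  set Wv : Fin k → (Fin n → ℝ) := fun i => V X (emb i) with hWv
  have hWorth : ∀ i i', Wv i ⬝ᵥ Wv i' = if i = i' then 1 else 0 := by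
    intro i i'
    rw [hWv]
    simp only []
    rw [V_orth X (emb i) (emb i')]
    by_cases h : i = i'
    · simp [h]
    · have : emb i ≠ emb i' := fun hc => h (hembinj hc)
      simp [h, this]
  set Cm : Matrix (Fin m) (Fin N) ℝ :=
    Matrix.of (fun r i => if hh : (i : ℕ) < k then X r ⬝ᵥ Wv ⟨i, hh⟩ else 0) with hCm
  set Dm : Matrix (Fin N) (Fin n) ℝ :=
    Matrix.of (fun i a => if hh : (i : ℕ) < k then Wv ⟨i, hh⟩ a else 0) with hDm
  refine ⟨Cm, Dm, ?_⟩
  have hCD : ∀ r a, (Cm * Dm) r a = ∑ i : Fin k, (X r ⬝ᵥ Wv i) * Wv i a := by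
    intro r a
    rw [Matrix.mul_apply]
    rw [Finset.sum_congr rfl (fun (i : Fin N) _ => show Cm r i * Dm i a
        = (if hh : (i : ℕ) < k then (X r ⬝ᵥ Wv ⟨i, hh⟩) * Wv ⟨i, hh⟩ a else 0) by
      rw [hCm, hDm]; simp only [Matrix.of_apply]; split <;> simp)]
    exact sum_dite_pad hkN (fun i => (X r ⬝ᵥ Wv i) * Wv i a)
  have hval : ∀ r, ∑ a, ((X - Cm * Dm) r a) ^ 2
      = X r ⬝ᵥ X r - ∑ i : Fin k, (X r ⬝ᵥ Wv i) ^ 2 := by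
    intro r
    have h2 : ∀ a, (X - Cm * Dm) r a = X r a - ∑ i : Fin k, (X r ⬝ᵥ Wv i) * Wv i a := by
      intro a
      rw [Matrix.sub_apply, hCD]
    rw [Finset.sum_congr rfl fun a _ => congrArg (· ^ 2) (h2 a)]
    rw [expand_sq (X r) Wv hWorth (fun i => X r ⬝ᵥ Wv i)]
    simp
  rw [Finset.sum_congr rfl fun r _ => hval r]
  rw [Finset.sum_sub_distrib, sum_ev]
  have h3 : ∑ r, ∑ i : Fin k, (X r ⬝ᵥ Wv i) ^ 2 = ∑ i : Fin k, ev X (emb i) := by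
    rw [Finset.sum_comm]
    apply Finset.sum_congr rfl; intro i _
    rw [QF X (Wv i)]
    rw [Finset.sum_eq_single (emb i)]
    · rw [hWv]; simp only []
      rw [V_orth X (emb i) (emb i)]; simp
    · intro j' _ hne
      rw [hWv]; simp only []
      rw [V_orth X j' (emb i)]; simp [hne]
    · simp
  rw [h3]
  have h4 : ∑ i : Fin k, ev X (emb i) = ∑ j ∈ Finset.range k, fv (ev X) j := by
    rw [← Fin.sum_univ_eq_sum_range (fun j => fv (ev X) j) k]
    apply Finset.sum_congr rfl; intro i _
    rw [fv_eq (ev X) i (lt_of_lt_of_le i.2 hkn)]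
  rw [h4, ← fv_sum (ev X)]
  rw [Finset.sum_Ico_eq_sub _ hkn]

theorem sum_Ico_eq (N : ℕ) :
    ∑ j ∈ Finset.Ico (min N n) n, fv (ev X) j
      = ∑ j ∈ Finset.Icc (N + 1) (min m n), fv (ev X) (j - 1) := by
  classical
  have htail : ∀ j, m ≤ j → fv (ev X) j = 0 :=
    fv_tail (ev X) (ev_nonneg X) (card_ne_zero_le X)
  have step1 : ∑ j ∈ Finset.Icc (N + 1) (min m n), fv (ev X) (j - 1)
      = ∑ j ∈ Finset.Ico N (min m n), fv (ev X) j := by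
    apply Finset.sum_bij' (fun j _ => j - 1) (fun j _ => j + 1) <;>
      intro j hj <;>
      first
        | rfl
        | (simp only [Finset.mem_Icc, Finset.mem_Ico] at *; omega)
  rw [step1]
  rcases le_or_gt n N with h | h
  · rw [min_eq_right h]
    rw [Finset.Ico_self, Finset.sum_empty]
    rw [Finset.Ico_eq_empty (by omega : ¬ N < min m n), Finset.sum_empty]
  · rw [min_eq_left h.le]
    rcases le_or_gt n m with h2 | h2
    · rw [min_eq_right h2]
    · rw [min_eq_left h2.le]
      rcases le_or_gt N m with h3 | h3
      · rw [← Finset.sum_Ico_consecutive _ h3 h2.le]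
        have hz : ∑ j ∈ Finset.Ico m n, fv (ev X) j = 0 := by
          apply Finset.sum_eq_zero
          intro j hj
          exact htail j (Finset.mem_Ico.mp hj).1
        rw [hz, add_zero]
      · rw [Finset.Ico_eq_empty (by omega : ¬ N < m), Finset.sum_empty]
        apply Finset.sum_eq_zero
        intro j hj
        exact htail j (by have := (Finset.mem_Ico.mp hj).1; omega)

end CoreThm2


end EY

/-! ### Bridging lemmas -/

lemma svals_sq {m n : ℕ} (M : Matrix (Fin m) (Fin n) ℝ) (j : ℕ) :
    svals M j ^ 2 = EY.fv (EY.ev M) (j - 1) := by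
  have h : svals M j = Real.sqrt (EY.fv (EY.ev M) (j - 1)) := rfl
  rw [h, Real.sq_sqrt (EY.fv_nonneg (EY.ev M) (EY.ev_nonneg M) (j - 1))]

lemma sumsq_rearrange (L A B : ℕ) (M : Matrix (Fin L) (Fin (A * B)) ℝ) :
    ∑ ℓ, ∑ c, M ℓ c ^ 2 = ∑ r, ∑ a, rearrange L A B M r a ^ 2 := by
  have hR : ∑ r : Fin (L * B), ∑ a, rearrange L A B M r a ^ 2
      = ∑ p : Fin L × Fin B, ∑ a : Fin A, M p.1 (pairIdx a p.2) ^ 2 := by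
    rw [← Equiv.sum_comp (finProdFinEquiv (m := L) (n := B))
      (fun r => ∑ a, rearrange L A B M r a ^ 2)]
    apply Finset.sum_congr rfl; intro p _
    apply Finset.sum_congr rfl; intro a _
    unfold rearrange
    rw [Equiv.symm_apply_apply]
  have hL : ∀ ℓ, ∑ c, M ℓ c ^ 2 = ∑ q : Fin A × Fin B, M ℓ (pairIdx q.1 q.2) ^ 2 := by
    intro ℓ
    rw [← Equiv.sum_comp (finProdFinEquiv (m := A) (n := B)) (fun c => M ℓ c ^ 2)]
    rfl
  have h1 : ∀ ℓ, ∑ q : Fin A × Fin B, M ℓ (pairIdx q.1 q.2) ^ 2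
      = ∑ a, ∑ b, M ℓ (pairIdx a b) ^ 2 := fun ℓ => Fintype.sum_prod_type _
  have h2 : ∑ p : Fin L × Fin B, ∑ a : Fin A, M p.1 (pairIdx a p.2) ^ 2
      = ∑ ℓ, ∑ b, ∑ a, M ℓ (pairIdx a b) ^ 2 := Fintype.sum_prod_type _
  rw [hR, h2, Finset.sum_congr rfl fun ℓ _ => hL ℓ,
    Finset.sum_congr rfl fun ℓ _ => h1 ℓ]
  exact Finset.sum_congr rfl fun ℓ _ => Finset.sum_comm

lemma frob_eq {L A B N : ℕ} (W : Matrix (Fin L) (Fin (A * B)) ℝ)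
    (T : Fin N → Matrix (Fin 1) (Fin A) ℝ) (S : Fin N → Matrix (Fin L) (Fin B) ℝ) :
    frobNorm (W - ∑ i, kron (T i) (S i)) ^ 2
      = ∑ r, ∑ a, ((rearrange L A B W -
          Matrix.of (fun r i => S i (finProdFinEquiv.symm r).1 (finProdFinEquiv.symm r).2) *
          Matrix.of (fun i a => T i 0 a)) r a) ^ 2 := by
  have hnn : 0 ≤ ∑ ℓ, ∑ c, ((W - ∑ i, kron (T i) (S i)) ℓ c) ^ 2 :=
    Finset.sum_nonneg fun ℓ _ => Finset.sum_nonneg fun c _ => sq_nonneg _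
  rw [frobNorm, Real.sq_sqrt hnn, sumsq_rearrange]
  apply Finset.sum_congr rfl; intro r _
  apply Finset.sum_congr rfl; intro a _
  congr 1
  show rearrange L A B (W - ∑ i, kron (T i) (S i)) r a = _
  unfold rearrange
  rw [Matrix.sub_apply]
  have hsum : (∑ i, kron (T i) (S i)) (finProdFinEquiv.symm r).1
      (pairIdx a (finProdFinEquiv.symm r).2)
      = ∑ i, kron (T i) (S i) (finProdFinEquiv.symm r).1
          (pairIdx a (finProdFinEquiv.symm r).2) := Matrix.sum_apply _ _ _ _
  rw [hsum]
  have hkron : ∀ i, kron (T i) (S i) (finProdFinEquiv.symm r).1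
      (pairIdx a (finProdFinEquiv.symm r).2)
      = T i 0 a * S i (finProdFinEquiv.symm r).1 (finProdFinEquiv.symm r).2 := by
    intro i
    unfold kron pairIdx
    rw [Equiv.symm_apply_apply]
  rw [Finset.sum_congr rfl fun i _ => hkron i]
  change _ = (fun r a => W (finProdFinEquiv.symm r).1 (pairIdx a (finProdFinEquiv.symm r).2)) r a
    - ((Matrix.of fun r i => S i (finProdFinEquiv.symm r).1 (finProdFinEquiv.symm r).2) *
      Matrix.of fun i a => T i 0 a) r a
  rw [Matrix.mul_apply]
  congr 1
  apply Finset.sum_congr rfl; intro i _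
  simp only [Matrix.of_apply]
  ring

/-- Truncated Singular Value Bound of Kronecker Decomposition: the minimum
squared Frobenius reconstruction error over all `N`-term Kronecker decompositions of `W`
equals `Σ_{j=N+1}^{min(L·B, A)} σ_j(R(W))²`; the minimum is attained. -/
theorem min_kron_approx_error_eq_truncated_svals (L A B N : ℕ) (hL : 0 < L) (hA : 0 < A)
    (hB : 0 < B) (hN : 0 < N) (W : Matrix (Fin L) (Fin (A * B)) ℝ) :
    IsLeast
      {e : ℝ | ∃ (T : Fin N → Matrix (Fin 1) (Fin A) ℝ)
          (S : Fin N → Matrix (Fin L) (Fin B) ℝ),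
          e = frobNorm (W - ∑ i, kron (T i) (S i)) ^ 2}
      (∑ j ∈ Finset.Icc (N + 1) (min (L * B) A), svals (rearrange L A B W) j ^ 2) := by
  classical
  set X := rearrange L A B W with hX
  have hval : ∑ j ∈ Finset.Icc (N + 1) (min (L * B) A), svals X j ^ 2
      = ∑ j ∈ Finset.Ico (min N A) A, EY.fv (EY.ev X) j := by
    rw [Finset.sum_congr rfl (fun j _ => svals_sq X j)]
    exact (EY.sum_Ico_eq X N).symm
  rw [hval]
  constructor
  · obtain ⟨C, D, hCD⟩ := EY.core_mem X N
    refine ⟨fun i => Matrix.of (fun _ a => D i a),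
      fun i => Matrix.of (fun ℓ b => C (finProdFinEquiv (ℓ, b)) i), ?_⟩
    rw [frob_eq]
    have hC : Matrix.of (fun r i =>
        (Matrix.of (fun ℓ b => C (finProdFinEquiv (ℓ, b)) i))
          (finProdFinEquiv.symm r).1 (finProdFinEquiv.symm r).2) = C := by
      ext r i
      simp only [Matrix.of_apply]
      rw [Prod.mk.eta, Equiv.apply_symm_apply]
    have hD : Matrix.of (fun i a => (Matrix.of (fun (_ : Fin 1) a => D i a)) 0 a) = D := by
      ext i a
      simp only [Matrix.of_apply]
    rw [hC, hD]
    exact hCD.symm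
  · rintro e ⟨T, S, rfl⟩
    rw [frob_eq]
    exact EY.core_lb X N _ _
end
end

section
/- (Achievability of the optimal Kronecker approximation) For any matrix W ∈ ℝ^{L×P} and any N ≥ 1, there exist templates T₁, …, T_N ∈ ℝ^{1×A} and scalers S₁, …, S_N ∈ ℝ^{L×B} such that ‖W − Σ_{i=1}^{N} T_i ⊗ S_i‖_F² = Σ_{j=N+1}^{min(L·B, A)} σ_j(R(W))², where σ_j denotes the j-th largest singular value of the rearranged matrix R(W). -/
open Matrix

noncomputable section

private lemma sq_err_orth {m A : ℕ} (M : Matrix (Fin m) (Fin A) ℝ) (v : Fin A → Fin A → ℝ)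
    (lam : Fin A → ℝ)
    (horth : ∀ k k', ∑ a, v k a * v k' a = if k = k' then (1:ℝ) else 0)
    (hcomp : ∀ a a', ∑ k, v k a * v k a' = if a = a' then (1:ℝ) else 0)
    (heig : ∀ k, (Mᵀ * M) *ᵥ v k = lam k • v k)
    (C : Finset (Fin A)) :
    ∑ r, ∑ a, (M r a - ∑ k ∈ C, (M *ᵥ v k) r * v k a) ^ 2 = ∑ k ∈ Cᶜ, lam k := by
  classical
  set u : Fin A → Fin m → ℝ := fun k => M *ᵥ v k with hu
  have huu : ∀ k k', (∑ r, u k r * u k' r) = if k = k' then lam k else 0 := by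
    intro k k'
    have h1 : (∑ r, u k r * u k' r) = v k ⬝ᵥ ((Mᵀ * M) *ᵥ v k') := by
      rw [← Matrix.mulVec_mulVec, Matrix.dotProduct_mulVec (v k), Matrix.vecMul_transpose]
      rfl
    rw [h1, heig k', dotProduct_smul, smul_eq_mul,
      show (v k ⬝ᵥ v k') = ∑ a, v k a * v k' a from rfl, horth k k']
    by_cases hkk : k = k' <;> simp [hkk]
  have hMdec : ∀ r a, M r a = ∑ k, u k r * v k a := by
    intro r a
    have : ∑ k, u k r * v k a = ∑ k, ∑ a', M r a' * v k a' * v k a := by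
      refine Finset.sum_congr rfl fun k _ => ?_
      rw [show u k r = ∑ a', M r a' * v k a' from rfl, Finset.sum_mul]
    rw [this, Finset.sum_comm]
    have : ∀ a' : Fin A, ∑ k, M r a' * v k a' * v k a = M r a' * ∑ k, v k a' * v k a := by
      intro a'
      rw [Finset.mul_sum]
      exact Finset.sum_congr rfl fun k _ => by ring
    simp_rw [this, hcomp]
    simp
  have hE : ∀ r a, M r a - ∑ k ∈ C, u k r * v k a = ∑ k ∈ Cᶜ, u k r * v k a := by
    intro r a
    rw [hMdec r a, ← Finset.sum_add_sum_compl C (fun k => u k r * v k a)]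
    ring
  have stageA : ∀ r, ∑ a, (∑ k ∈ Cᶜ, u k r * v k a) ^ 2
      = ∑ k ∈ Cᶜ, ∑ k' ∈ Cᶜ, (u k r * u k' r) * ∑ a, v k a * v k' a := by
    intro r
    simp_rw [sq, Finset.sum_mul_sum]
    rw [Finset.sum_comm]
    refine Finset.sum_congr rfl fun k _ => ?_
    rw [Finset.sum_comm]
    refine Finset.sum_congr rfl fun k' _ => ?_
    rw [Finset.mul_sum]
    exact Finset.sum_congr rfl fun a _ => by ring
  calc ∑ r, ∑ a, (M r a - ∑ k ∈ C, u k r * v k a) ^ 2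
      = ∑ r, ∑ k ∈ Cᶜ, ∑ k' ∈ Cᶜ, (u k r * u k' r) * ∑ a, v k a * v k' a := by
        refine Finset.sum_congr rfl fun r _ => ?_
        simp_rw [hE]
        exact stageA r
    _ = ∑ k ∈ Cᶜ, ∑ k' ∈ Cᶜ, (∑ r, u k r * u k' r) * ∑ a, v k a * v k' a := by
        rw [Finset.sum_comm]
        refine Finset.sum_congr rfl fun k _ => ?_
        rw [Finset.sum_comm]
        refine Finset.sum_congr rfl fun k' _ => ?_
        rw [Finset.sum_mul]
    _ = ∑ k ∈ Cᶜ, lam k := by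
        refine Finset.sum_congr rfl fun k hk => ?_
        rw [Finset.sum_eq_single k]
        · rw [huu, horth]; simp
        · intro k' _ hne
          rw [huu, horth]
          simp [Ne.symm hne]
        · intro hnk; exact absurd hk hnk

private lemma getD_sort_nonneg {m A : ℕ} (M : Matrix (Fin m) (Fin A) ℝ)
    (h : (Mᵀ * M).IsHermitian) (j : ℕ) :
    0 ≤ (((List.ofFn h.eigenvalues).insertionSort (· ≤ ·)).reverse).getD j 0 := by
  have hpsd : (Mᵀ * M).PosSemidef := by
    rw [← Matrix.conjTranspose_eq_transpose_of_trivial]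
    exact Matrix.posSemidef_conjTranspose_mul_self M
  set ls : List ℝ := (List.ofFn h.eigenvalues).insertionSort (· ≤ ·) with hls
  rcases lt_or_ge j ls.reverse.length with hj | hj
  · rw [List.getD_eq_getElem _ _ hj]
    have hmem : ls.reverse[j] ∈ ls.reverse := List.getElem_mem _
    rw [List.mem_reverse] at hmem
    have hmem2 : ls.reverse[j] ∈ List.ofFn h.eigenvalues :=
      (List.perm_insertionSort _ _).mem_iff.mp hmem
    rw [List.mem_ofFn] at hmem2
    obtain ⟨k, hk⟩ := hmem2
    rw [← hk]
    exact hpsd.eigenvalues_nonneg k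
  · rw [List.getD_eq_default _ _ hj]

private lemma sum_sq_rearrange {L A B : ℕ} (X : Matrix (Fin L) (Fin (A * B)) ℝ) :
    ∑ ℓ, ∑ c, (X ℓ c) ^ 2 = ∑ r, ∑ a, (rearrange L A B X r a) ^ 2 := by
  have h1 : ∀ ℓ : Fin L, ∑ c, (X ℓ c) ^ 2 = ∑ a : Fin A, ∑ b : Fin B, (X ℓ (pairIdx a b)) ^ 2 := by
    intro ℓ
    rw [← Equiv.sum_comp finProdFinEquiv (fun c => (X ℓ c) ^ 2), Fintype.sum_prod_type]
    rfl
  have h2 : ∑ r : Fin (L * B), ∑ a, (rearrange L A B X r a) ^ 2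
      = ∑ ℓ : Fin L, ∑ b : Fin B, ∑ a : Fin A, (X ℓ (pairIdx a b)) ^ 2 := by
    rw [← Equiv.sum_comp finProdFinEquiv
      (fun r => ∑ a, (rearrange L A B X r a) ^ 2), Fintype.sum_prod_type]
    refine Finset.sum_congr rfl fun ℓ _ => Finset.sum_congr rfl fun b _ =>
      Finset.sum_congr rfl fun a _ => ?_
    simp [rearrange, Equiv.symm_apply_apply]
  rw [h2]
  refine Finset.sum_congr rfl fun ℓ _ => ?_
  rw [h1 ℓ, Finset.sum_comm]

private lemma rearrange_sub_kron {L A B N : ℕ} (W : Matrix (Fin L) (Fin (A * B)) ℝ)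
    (t : Fin N → Fin A → ℝ) (w : Fin N → Fin (L * B) → ℝ) :
    ∀ r a, rearrange L A B (W - ∑ i, kron (fun _ a => t i a) (fun ℓ b => w i (finProdFinEquiv (ℓ, b)))) r a
      = rearrange L A B W r a - ∑ i, w i r * t i a := by
  intro r a
  simp only [rearrange, Matrix.sub_apply, Matrix.sum_apply, kron, pairIdx,
    Equiv.symm_apply_apply]
  congr 1
  refine Finset.sum_congr rfl fun i _ => ?_
  rw [show ((finProdFinEquiv.symm r).1, (finProdFinEquiv.symm r).2)
      = finProdFinEquiv.symm r from rfl, Equiv.apply_symm_apply]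
  ring

private lemma main_aux {m A : ℕ} (hA : 0 < A) {N : ℕ} (hN : 1 ≤ N)
    (M : Matrix (Fin m) (Fin A) ℝ) (h : (Mᵀ * M).IsHermitian) :
    ∃ (t : Fin N → Fin A → ℝ) (w : Fin N → Fin m → ℝ),
      ∑ r, ∑ a, (M r a - ∑ i, w i r * t i a) ^ 2
        = ∑ j ∈ Finset.Icc (N + 1) (min m A),
            ((((List.ofFn h.eigenvalues).insertionSort (· ≤ ·)).reverse).getD (j - 1) 0) := by
  classical
  have hN0 : 0 < N := hN
  have hpsd : (Mᵀ * M).PosSemidef := by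
    rw [← Matrix.conjTranspose_eq_transpose_of_trivial]
    exact Matrix.posSemidef_conjTranspose_mul_self M
  set lam : Fin A → ℝ := h.eigenvalues with hlam
  have hnonneg : ∀ k, 0 ≤ lam k := fun k => hpsd.eigenvalues_nonneg k
  set v : Fin A → Fin A → ℝ := fun k a => h.eigenvectorBasis k a with hv
  -- orthonormality
  have horth : ∀ k k', ∑ a, v k a * v k' a = if k = k' then (1:ℝ) else 0 := by
    intro k k'
    have ho := h.eigenvectorBasis.orthonormal
    rw [orthonormal_iff_ite] at ho
    have h2 := ho k k'
    simp only [PiLp.inner_apply, RCLike.inner_apply, starRingEnd_apply, star_trivial] at h2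
    simpa [hv, mul_comm] using h2
  -- completeness
  have hcomp : ∀ a a', ∑ k, v k a * v k a' = if a = a' then (1:ℝ) else 0 := by
    have hVVt : (Matrix.of v) * (Matrix.of v)ᵀ = 1 := by
      ext k k'
      simp only [Matrix.mul_apply, Matrix.transpose_apply, Matrix.of_apply, Matrix.one_apply]
      exact horth k k'
    have hVtV := mul_eq_one_comm.mp hVVt
    intro a a'
    have h3 := congrFun (congrFun hVtV a) a'
    simpa [Matrix.mul_apply, Matrix.transpose_apply, Matrix.one_apply] using h3
  have heig : ∀ k, (Mᵀ * M) *ᵥ v k = lam k • v k := fun k => h.mulVec_eigenvectorBasis k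
  -- sorting
  set σp : Equiv.Perm (Fin A) := Tuple.sort lam with hσp
  set e : Equiv.Perm (Fin A) := Fin.revPerm.trans σp with he
  set ls : List ℝ := (List.ofFn lam).insertionSort (· ≤ ·) with hlsdef
  have hls : ls = List.ofFn (lam ∘ σp) := by
    refine (fun hp h1 h2 => List.Perm.eq_of_pairwise' (r := (· ≤ ·)) h1 h2 hp) ?_ ?_ ?_
    · exact (List.perm_insertionSort _ _).trans (σp.ofFn_comp_perm lam).symm
    · exact List.pairwise_insertionSort _ _
    · exact List.pairwise_ofFn.2 fun i j hij => Tuple.monotone_sort lam hij.le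
  have hlen : ls.length = A := (List.perm_insertionSort _ _).length_eq.trans List.length_ofFn
  have hgd : ∀ (j : ℕ) (hj : j < A), ls.reverse.getD j 0 = lam (e ⟨j, hj⟩) := by
    intro j hj
    rw [List.getD_eq_getElem _ _ (by simpa [hlen] using hj)]
    rw [List.getElem_reverse, List.getElem_of_eq hls, List.getElem_ofFn]
    show lam (σp _) = lam (σp (Fin.rev ⟨j, hj⟩))
    congr 2
    ext
    simp only [Fin.rev, hlen, List.length_ofFn]
    omega
  have hgd0 : ∀ j : ℕ, 0 ≤ ls.reverse.getD j 0 := by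
    intro j
    rcases lt_or_ge j A with hj | hj
    · rw [hgd j hj]; exact hnonneg _
    · rw [List.getD_eq_default]
      · simp [hlen]; omega
  have hanti : ∀ j j' : Fin A, j ≤ j' → lam (e j') ≤ lam (e j) := by
    intro j j' hjj
    have : Fin.rev j' ≤ Fin.rev j := Fin.rev_le_rev.mpr hjj
    exact Tuple.monotone_sort lam this
  have hcard : (Finset.univ.filter fun k => lam k ≠ 0).card ≤ m := by
    have h1 : (Mᵀ * M).rank = Fintype.card {i // h.eigenvalues i ≠ 0} :=
      h.rank_eq_card_non_zero_eigs
    have h2 : (Mᵀ * M).rank = M.rank := Matrix.rank_transpose_mul_self M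
    have h3 : M.rank ≤ m := le_trans (Matrix.rank_le_card_height M) (by simp)
    rw [Fintype.card_subtype, ← hlam] at h1
    omega
  have htail : ∀ (j : ℕ) (hj : j < A), m ≤ j → lam (e ⟨j, hj⟩) = 0 := by
    intro j hj hm
    by_contra hne
    have hpos : 0 < lam (e ⟨j, hj⟩) := lt_of_le_of_ne (hnonneg _) (Ne.symm hne)
    have hsub : ∀ a ∈ Finset.Iic (⟨j, hj⟩ : Fin A),
        e a ∈ Finset.univ.filter fun k => lam k ≠ 0 := by
      intro a ha
      simp only [Finset.mem_Iic] at ha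
      simp only [Finset.mem_filter, Finset.mem_univ, true_and]
      exact ne_of_gt (lt_of_lt_of_le hpos (hanti a ⟨j, hj⟩ ha))
    have hinj : Set.InjOn e (Finset.Iic (⟨j, hj⟩ : Fin A)) :=
      fun a _ b _ hab => e.injective hab
    have := Finset.card_le_card_of_injOn e hsub hinj
    rw [Fin.card_Iic] at this
    have hval : ((⟨j, hj⟩ : Fin A) : ℕ) = j := rfl
    rw [hval] at this
    omega
  -- construction
  set u : Fin A → Fin m → ℝ := fun k => M *ᵥ v k with hu
  refine ⟨fun i a => if (i : ℕ) < A then v (e ⟨(i : ℕ) % A, Nat.mod_lt _ hA⟩) a else 0,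
          fun i r => if (i : ℕ) < A then u (e ⟨(i : ℕ) % A, Nat.mod_lt _ hA⟩) r else 0, ?_⟩
  set Sf : Finset (Fin A) := Finset.univ.filter (fun k : Fin A => ((e.symm k : ℕ) < N))
    with hSf
  have hgen : ∀ F : Fin A → ℝ,
      (∑ i : Fin N, if (i : ℕ) < A then F (e ⟨(i : ℕ) % A, Nat.mod_lt _ hA⟩) else 0)
        = ∑ k ∈ Sf, F k := by
    intro F
    rw [← Finset.sum_filter]
    refine Finset.sum_nbij' (i := fun i : Fin N => e ⟨(i : ℕ) % A, Nat.mod_lt _ hA⟩)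
      (j := fun k : Fin A => (⟨(e.symm k : ℕ) % N, Nat.mod_lt _ hN0⟩ : Fin N)) ?_ ?_ ?_ ?_ ?_
    · intro i hi
      simp only [Finset.mem_filter, Finset.mem_univ, true_and] at hi ⊢
      rw [hSf]
      simp only [Finset.mem_filter, Finset.mem_univ, true_and]
      rw [Equiv.symm_apply_apply]
      simpa [Nat.mod_eq_of_lt hi] using i.isLt
    · intro k hk
      rw [hSf] at hk
      simp only [Finset.mem_filter, Finset.mem_univ, true_and] at hk ⊢
      calc ((⟨(e.symm k : ℕ) % N, Nat.mod_lt _ hN0⟩ : Fin N) : ℕ) = (e.symm k : ℕ) % N := rfl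
        _ < A := lt_of_le_of_lt (Nat.mod_le _ _) (e.symm k).isLt
    · intro i hi
      simp only [Finset.mem_filter, Finset.mem_univ, true_and] at hi
      ext
      simp [Equiv.symm_apply_apply, Nat.mod_eq_of_lt hi, Nat.mod_eq_of_lt i.isLt]
    · intro k hk
      rw [hSf] at hk
      simp only [Finset.mem_filter, Finset.mem_univ, true_and] at hk
      have hmod : ((e.symm k : ℕ) % N) = (e.symm k : ℕ) := Nat.mod_eq_of_lt hk
      calc e ⟨((⟨(e.symm k : ℕ) % N, Nat.mod_lt _ hN0⟩ : Fin N) : ℕ) % A, Nat.mod_lt _ hA⟩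
          = e (e.symm k) := by
            congr 1
            ext
            simp [hmod, Nat.mod_eq_of_lt (e.symm k).isLt]
        _ = k := e.apply_symm_apply k
    · intro i hi
      rfl
  have hprod : ∀ (i : Fin N) (r : Fin m) (a : Fin A),
      (if (i : ℕ) < A then u (e ⟨(i : ℕ) % A, Nat.mod_lt _ hA⟩) r else 0)
        * (if (i : ℕ) < A then v (e ⟨(i : ℕ) % A, Nat.mod_lt _ hA⟩) a else 0)
      = (if (i : ℕ) < A then
          u (e ⟨(i : ℕ) % A, Nat.mod_lt _ hA⟩) r * v (e ⟨(i : ℕ) % A, Nat.mod_lt _ hA⟩) a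
        else 0) := by
    intro i r a
    by_cases hi : (i : ℕ) < A <;> simp [hi]
  have hstep1 : ∑ j ∈ Finset.univ.filter (fun j : Fin A => ¬ ((j : ℕ) < N)), lam (e j)
      = ∑ k ∈ Sfᶜ, lam k := by
    refine Finset.sum_equiv e ?_ ?_
    · intro j
      rw [hSf]
      simp [Finset.mem_compl, Equiv.symm_apply_apply]
    · intro j _
      rfl
  have hstep2 : ∑ j ∈ Finset.univ.filter (fun j : Fin A => ¬ ((j : ℕ) < N)), lam (e j)
      = ∑ n ∈ Finset.Ico N A, ls.reverse.getD n 0 := by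
    refine Finset.sum_nbij' (i := fun j : Fin A => (j : ℕ))
      (j := fun n : ℕ => (⟨n % A, Nat.mod_lt _ hA⟩ : Fin A)) ?_ ?_ ?_ ?_ ?_
    · intro j hj
      simp only [Finset.mem_filter, Finset.mem_univ, true_and] at hj
      simp only [Finset.mem_Ico]
      exact ⟨Nat.le_of_not_lt hj, j.isLt⟩
    · intro n hn
      simp only [Finset.mem_Ico] at hn
      simp only [Finset.mem_filter, Finset.mem_univ, true_and]
      have : n % A = n := Nat.mod_eq_of_lt hn.2
      simp only [this]
      omega
    · intro j hj
      ext
      simp [Nat.mod_eq_of_lt j.isLt]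
    · intro n hn
      simp only [Finset.mem_Ico] at hn
      simp [Nat.mod_eq_of_lt hn.2]
    · intro j hj
      rw [hgd (j : ℕ) j.isLt]
  have hstep3 : ∑ j ∈ Finset.Icc (N + 1) (min m A), ls.reverse.getD (j - 1) 0
      = ∑ n ∈ Finset.Ico N (min m A), ls.reverse.getD n 0 := by
    refine Finset.sum_nbij' (i := fun j : ℕ => j - 1) (j := fun n : ℕ => n + 1) ?_ ?_ ?_ ?_ ?_
    · intro j hj
      simp only [Finset.mem_Icc] at hj
      simp only [Finset.mem_Ico]
      omega
    · intro n hn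
      simp only [Finset.mem_Ico] at hn
      simp only [Finset.mem_Icc]
      omega
    · intro j hj
      simp only [Finset.mem_Icc] at hj
      show j - 1 + 1 = j
      omega
    · intro n hn
      simp only [Finset.mem_Ico] at hn
      show n + 1 - 1 = n
      omega
    · intro j hj
      rfl
  have hstep4 : ∑ n ∈ Finset.Ico N (min m A), ls.reverse.getD n 0
      = ∑ n ∈ Finset.Ico N A, ls.reverse.getD n 0 := by
    refine Finset.sum_subset (Finset.Ico_subset_Ico_right (min_le_right m A)) ?_
    intro n hn hn'
    simp only [Finset.mem_Ico] at hn hn'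
    have hnA : n < A := hn.2
    have hmn : m ≤ n := by omega
    rw [hgd n hnA]
    exact htail n hnA hmn
  calc ∑ r, ∑ a, (M r a - ∑ i : Fin N,
        (if (i : ℕ) < A then u (e ⟨(i : ℕ) % A, Nat.mod_lt _ hA⟩) r else 0)
          * (if (i : ℕ) < A then v (e ⟨(i : ℕ) % A, Nat.mod_lt _ hA⟩) a else 0)) ^ 2
      = ∑ r, ∑ a, (M r a - ∑ k ∈ Sf, (M *ᵥ v k) r * v k a) ^ 2 := by
        refine Finset.sum_congr rfl fun r _ => Finset.sum_congr rfl fun a _ => ?_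
        rw [Finset.sum_congr rfl fun i _ => hprod i r a, hgen (fun k => u k r * v k a)]
    _ = ∑ k ∈ Sfᶜ, lam k := sq_err_orth M v lam horth hcomp heig Sf
    _ = ∑ j ∈ Finset.univ.filter (fun j : Fin A => ¬ ((j : ℕ) < N)), lam (e j) := hstep1.symm
    _ = ∑ n ∈ Finset.Ico N A, ls.reverse.getD n 0 := hstep2
    _ = ∑ n ∈ Finset.Ico N (min m A), ls.reverse.getD n 0 := hstep4.symm
    _ = ∑ j ∈ Finset.Icc (N + 1) (min m A), ls.reverse.getD (j - 1) 0 := hstep3.symm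

/-- Achievability of the optimal Kronecker approximation: for any `W` and
`N ≥ 1` there is an `N`-term Kronecker decomposition whose squared Frobenius error equals
the truncated singular-value sum of `R(W)`. -/
theorem exists_kron_approx_achieving_truncated_svals (L A B N : ℕ) (hL : 0 < L)
    (hA : 0 < A) (hB : 0 < B) (hN : 1 ≤ N) (W : Matrix (Fin L) (Fin (A * B)) ℝ) :
    ∃ (T : Fin N → Matrix (Fin 1) (Fin A) ℝ) (S : Fin N → Matrix (Fin L) (Fin B) ℝ),
      frobNorm (W - ∑ i, kron (T i) (S i)) ^ 2 =
        ∑ j ∈ Finset.Icc (N + 1) (min (L * B) A), svals (rearrange L A B W) j ^ 2 := by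
  classical
  have hHerm : ((rearrange L A B W)ᵀ * rearrange L A B W).IsHermitian := by
    rw [← Matrix.conjTranspose_eq_transpose_of_trivial]
    exact Matrix.isHermitian_conjTranspose_mul_self _
  obtain ⟨t, w, hw⟩ := main_aux (m := L * B) hA hN (rearrange L A B W) hHerm
  refine ⟨fun i => fun _ a => t i a, fun i => fun ℓ b => w i (finProdFinEquiv (ℓ, b)), ?_⟩
  have hsv : ∀ j : ℕ, svals (rearrange L A B W) j ^ 2
      = (((List.ofFn hHerm.eigenvalues).insertionSort (· ≤ ·)).reverse).getD (j - 1) 0 := by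
    intro j
    rw [show svals (rearrange L A B W) j = Real.sqrt
        ((((List.ofFn hHerm.eigenvalues).insertionSort (· ≤ ·)).reverse).getD (j - 1) 0)
      from rfl]
    exact Real.sq_sqrt (getD_sort_nonneg _ hHerm _)
  calc frobNorm (W - ∑ i : Fin N,
          kron (fun _ a => t i a) (fun ℓ b => w i (finProdFinEquiv (ℓ, b)))) ^ 2
      = ∑ ℓ, ∑ c, ((W - ∑ i : Fin N,
          kron (fun _ a => t i a) (fun ℓ b => w i (finProdFinEquiv (ℓ, b)))) ℓ c) ^ 2 := by
        rw [frobNorm, Real.sq_sqrt (by positivity)]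
    _ = ∑ r, ∑ a, (rearrange L A B (W - ∑ i : Fin N,
          kron (fun _ a => t i a) (fun ℓ b => w i (finProdFinEquiv (ℓ, b)))) r a) ^ 2 :=
        sum_sq_rearrange _
    _ = ∑ r, ∑ a, (rearrange L A B W r a - ∑ i, w i r * t i a) ^ 2 := by
        refine Finset.sum_congr rfl fun r _ => Finset.sum_congr rfl fun a _ => ?_
        rw [rearrange_sub_kron W t w r a]
    _ = ∑ j ∈ Finset.Icc (N + 1) (min (L * B) A),
          (((List.ofFn hHerm.eigenvalues).insertionSort (· ≤ ·)).reverse).getD (j - 1) 0 := hw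
    _ = ∑ j ∈ Finset.Icc (N + 1) (min (L * B) A), svals (rearrange L A B W) j ^ 2 :=
        Finset.sum_congr rfl fun j _ => (hsv j).symm
end
end

section
/- (Exact recovery under the low-rank bottleneck) If W ∈ ℝ^{L×P} is such that its rearranged matrix R(W) ∈ ℝ^{(L·B)×A} has rank at most N, then W admits an exact N-term Kronecker decomposition: there exist templates T₁, …, T_N ∈ ℝ^{1×A} and scalers S₁, …, S_N ∈ ℝ^{L×B} with W = Σ_{i=1}^{N} T_i ⊗ S_i. -/
open Matrix

noncomputable section

lemma dite_sum_fin {α : Type*} [AddCommMonoid α] (N r : ℕ) (h : r ≤ N) (f : Fin r → α) :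
    (∑ i : Fin N, if hh : (i : ℕ) < r then f ⟨i, hh⟩ else 0) = ∑ j : Fin r, f j := by
  classical
  set g : ℕ → α := fun i => if hh : i < r then f ⟨i, hh⟩ else 0 with hg
  have h1 : (∑ i : Fin N, if hh : (i : ℕ) < r then f ⟨i, hh⟩ else 0)
      = ∑ i ∈ Finset.range N, g i := Fin.sum_univ_eq_sum_range g N
  have h2 : ∑ i ∈ Finset.range N, g i = ∑ i ∈ Finset.range r, g i := by
    refine (Finset.sum_subset (Finset.range_subset_range.mpr h) ?_).symm
    intro x _ hx
    simp only [Finset.mem_range, not_lt] at hx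
    simp [hg, Nat.not_lt.mpr hx]
  have h3 : ∑ i ∈ Finset.range r, g i = ∑ j : Fin r, f j := by
    rw [← Fin.sum_univ_eq_sum_range g r]
    refine Finset.sum_congr rfl fun j _ => ?_
    simp [hg, j.isLt]
  rw [h1, h2, h3]

/-- Exact recovery under the low-rank bottleneck: if `R(W)` has rank at
most `N`, then `W` admits an exact `N`-term Kronecker decomposition. -/
theorem exists_exact_kron_decomposition_of_rearrange_rank_le (L A B N : ℕ) (hL : 0 < L)
    (hA : 0 < A) (hB : 0 < B) (hN : 0 < N) (W : Matrix (Fin L) (Fin (A * B)) ℝ)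
    (hW : (rearrange L A B W).rank ≤ N) :
    ∃ (T : Fin N → Matrix (Fin 1) (Fin A) ℝ) (S : Fin N → Matrix (Fin L) (Fin B) ℝ),
      W = ∑ i, kron (T i) (S i) := by
  classical
  set M := rearrange L A B W with hM
  set V := LinearMap.range M.mulVecLin with hV
  have hrank : Module.finrank ℝ V = M.rank := rfl
  set r := Module.finrank ℝ V with hr
  have hrN : r ≤ N := by rw [hrank]; exact hW
  let bV : Module.Basis (Fin r) ℝ V := Module.finBasis ℝ V
  -- column a of M is in V
  have hcol : ∀ a : Fin A, (fun ρ => M ρ a) ∈ V := by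
    intro a
    refine ⟨Pi.single a 1, ?_⟩
    simp [Matrix.mulVecLin_apply]
    rfl
  let v : Fin A → V := fun a => ⟨fun ρ => M ρ a, hcol a⟩
  have hrepr : ∀ a : Fin A, ∀ ρ : Fin (L * B),
      M ρ a = ∑ j : Fin r, bV.repr (v a) j * ((bV j : (Fin (L * B)) → ℝ) ρ) := by
    intro a ρ
    have h := bV.sum_repr (v a)
    have h2 := congrArg (fun (x : V) => (x : (Fin (L * B)) → ℝ) ρ) h
    simp only [Submodule.coe_sum, Submodule.coe_smul, Finset.sum_apply, Pi.smul_apply, smul_eq_mul] at h2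
    exact h2.symm
  refine ⟨fun i => fun _ a => if h : (i : ℕ) < r then bV.repr (v a) ⟨i, h⟩ else 0,
          fun i => fun ℓ b => if h : (i : ℕ) < r then (bV ⟨i, h⟩ : (Fin (L * B)) → ℝ) (pairIdx ℓ b) else 0,
          ?_⟩
  ext ℓ c
  have hc : c = pairIdx (finProdFinEquiv.symm c).1 (finProdFinEquiv.symm c).2 :=
    (finProdFinEquiv.apply_symm_apply c).symm
  have hWc : W ℓ c = M (pairIdx ℓ (finProdFinEquiv.symm c).2) (finProdFinEquiv.symm c).1 := by
    conv_lhs => rw [hc]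
    simp [hM, rearrange, pairIdx]
  rw [Matrix.sum_apply]
  simp only [kron]
  rw [hWc, hrepr]
  have := dite_sum_fin (α := ℝ) N r hrN
    (fun j => bV.repr (v (finProdFinEquiv.symm c).1) j *
      (bV j : (Fin (L * B)) → ℝ) (pairIdx ℓ (finProdFinEquiv.symm c).2))
  rw [← this]
  refine Finset.sum_congr rfl fun i _ => ?_
  by_cases h : (i : ℕ) < r <;> simp [h]
end
end

section
/- (Theorem: Universal Approximation under Kronecker Constraints) Let f be a network map assigning to each weight matrix W' ∈ ℝ^{L×P} a function f(·; W') : X → ℝ^{m} on a set X, and suppose f is K-Lipschitz in its weights uniformly over inputs, i.e., for all W₁, W₂ ∈ ℝ^{L×P} and all x ∈ X, ‖f(x; W₁) − f(x; W₂)‖ ≤ K·‖W₁ − W₂‖_F for some constant K > 0. Fix a target weight matrix W ∈ ℝ^{L×P} and an error tolerance ε > 0. If the number of templates N satisfies Σ_{j=N+1}^{min(L·B, A)} σ_j(R(W))² ≤ ε²/K², then there exist templates T₁, …, T_N ∈ ℝ^{1×A} and scalers S₁, …, S_N ∈ ℝ^{L×B} such that, setting W_⋆ = Σ_{i=1}^{N}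 T_i ⊗ S_i, one has sup_{x ∈ X} ‖f(x; W_⋆) − f(x; W)‖ ≤ ε. -/
open Matrix

noncomputable section


-- entrywise orthonormality and completeness of the eigenvector basis
lemma onb_ortho {q : ℕ} {A : Matrix (Fin q) (Fin q) ℝ} (h : A.IsHermitian) (i j : Fin q) :
    ∑ a, (h.eigenvectorBasis i) a * (h.eigenvectorBasis j) a
      = if i = j then (1:ℝ) else 0 := by
  have h1 : star (h.eigenvectorUnitary : Matrix (Fin q) (Fin q) ℝ)
      * (h.eigenvectorUnitary : Matrix (Fin q) (Fin q) ℝ) = 1 :=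
    Unitary.coe_star_mul_self h.eigenvectorUnitary
  have h2 := congrFun (congrFun (congrArg (fun M => (M : Matrix (Fin q) (Fin q) ℝ)) h1) i) j
  simpa [Matrix.mul_apply, Matrix.one_apply, Matrix.star_apply, mul_comm] using h2

lemma onb_complete {q : ℕ} {A : Matrix (Fin q) (Fin q) ℝ} (h : A.IsHermitian) (a a' : Fin q) :
    ∑ j, (h.eigenvectorBasis j) a * (h.eigenvectorBasis j) a'
      = if a = a' then (1:ℝ) else 0 := by
  have h1 : (h.eigenvectorUnitary : Matrix (Fin q) (Fin q) ℝ)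
      * star (h.eigenvectorUnitary : Matrix (Fin q) (Fin q) ℝ) = 1 :=
    Unitary.coe_mul_star_self h.eigenvectorUnitary
  have h2 := congrFun (congrFun (congrArg (fun M => (M : Matrix (Fin q) (Fin q) ℝ)) h1) a) a'
  simpa [Matrix.mul_apply, Matrix.one_apply, Matrix.star_apply] using h2

lemma mulVec_norm_sq {p q : ℕ} (M : Matrix (Fin p) (Fin q) ℝ) (h : (Mᵀ * M).IsHermitian)
    (j : Fin q) :
    ∑ r, ((M *ᵥ ⇑(h.eigenvectorBasis j)) r) ^ 2 = h.eigenvalues j := by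
  have hv : (Mᵀ * M) *ᵥ ⇑(h.eigenvectorBasis j)
      = h.eigenvalues j • ⇑(h.eigenvectorBasis j) := h.mulVec_eigenvectorBasis j
  have hd : ∑ r, ((M *ᵥ ⇑(h.eigenvectorBasis j)) r) ^ 2
      = (M *ᵥ ⇑(h.eigenvectorBasis j)) ⬝ᵥ (M *ᵥ ⇑(h.eigenvectorBasis j)) := by
    simp [dotProduct, pow_two]
  rw [hd, Matrix.dotProduct_mulVec, ← Matrix.mulVec_transpose, Matrix.mulVec_mulVec, hv]
  have h1 : ∑ x, h.eigenvectorBasis j x * h.eigenvectorBasis j x = 1 := by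
    simpa using onb_ortho h j j
  simp only [dotProduct, Pi.smul_apply, smul_eq_mul, mul_assoc]
  rw [← Finset.mul_sum, h1, mul_one]

lemma eckart {p q : ℕ} (M : Matrix (Fin p) (Fin q) ℝ) (h : (Mᵀ * M).IsHermitian)
    (s : Finset (Fin q)) :
    ∑ r, ∑ a, (M r a
        - ∑ j ∈ s, (M *ᵥ ⇑(h.eigenvectorBasis j)) r * (h.eigenvectorBasis j) a) ^ 2
      = ∑ j ∈ sᶜ, h.eigenvalues j := by
  set v : Fin q → Fin q → ℝ := fun j => ⇑(h.eigenvectorBasis j) with hv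
  have happ : ∀ j a, v j a = (h.eigenvectorBasis j) a := fun _ _ => rfl
  -- expansion of M in the eigenbasis
  have hM : ∀ r a, ∑ j, (M *ᵥ v j) r * v j a = M r a := by
    intro r a
    simp only [Matrix.mulVec, dotProduct]
    calc ∑ j, (∑ c, M r c * v j c) * v j a
        = ∑ j, ∑ c, M r c * (v j c * v j a) := by
          simp [Finset.sum_mul, mul_assoc]
      _ = ∑ c, M r c * ∑ j, (v j c * v j a) := by
          rw [Finset.sum_comm]
          simp [Finset.mul_sum]
      _ = M r a := by
          simp only [happ, onb_complete h]
          simp [Finset.mul_sum, mul_ite]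
  have hsplit : ∀ r a,
      M r a - ∑ j ∈ s, (M *ᵥ v j) r * v j a = ∑ j ∈ sᶜ, (M *ᵥ v j) r * v j a := by
    intro r a
    have := Finset.sum_add_sum_compl s (fun j => (M *ᵥ v j) r * v j a)
    rw [← hM r a, ← this]
    ring
  calc ∑ r, ∑ a, (M r a - ∑ j ∈ s, (M *ᵥ v j) r * v j a) ^ 2
      = ∑ r, ∑ a, (∑ j ∈ sᶜ, (M *ᵥ v j) r * v j a) ^ 2 := by
        simp only [hsplit]
    _ = ∑ r, ∑ j ∈ sᶜ, ((M *ᵥ v j) r) ^ 2 := by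
        refine Finset.sum_congr rfl fun r _ => ?_
        calc ∑ a, (∑ j ∈ sᶜ, (M *ᵥ v j) r * v j a) ^ 2
            = ∑ a, ∑ j ∈ sᶜ, ∑ k ∈ sᶜ,
                ((M *ᵥ v j) r * v j a) * ((M *ᵥ v k) r * v k a) := by
              simp [pow_two, Finset.sum_mul_sum]
          _ = ∑ j ∈ sᶜ, ∑ k ∈ sᶜ, (M *ᵥ v j) r * (M *ᵥ v k) r * ∑ a, v j a * v k a := by
              rw [Finset.sum_comm]
              refine Finset.sum_congr rfl fun j _ => ?_
              rw [Finset.sum_comm]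
              refine Finset.sum_congr rfl fun k _ => ?_
              rw [Finset.mul_sum]
              refine Finset.sum_congr rfl fun a _ => ?_
              ring
          _ = ∑ j ∈ sᶜ, ((M *ᵥ v j) r) ^ 2 := by
              refine Finset.sum_congr rfl fun j hj => ?_
              rw [Finset.sum_eq_single j]
              · simp only [happ]
                rw [onb_ortho h j j, if_pos rfl]
                ring
              · intro k hk hkj
                simp only [happ]
                rw [onb_ortho h j k, if_neg (fun e => hkj e.symm)]
                ring
              · intro hjj; exact absurd hj hjj
    _ = ∑ j ∈ sᶜ, h.eigenvalues j := by
        rw [Finset.sum_comm]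
        exact Finset.sum_congr rfl fun j _ => mulVec_norm_sq M h j


lemma svals_sq_eq {p q : ℕ} (M : Matrix (Fin p) (Fin q) ℝ) (h : (Mᵀ * M).IsHermitian)
    (j : ℕ) (h1 : 1 ≤ j) (h2 : j ≤ q) :
    svals M j ^ 2 = h.eigenvalues (Tuple.sort h.eigenvalues ⟨q - j, by omega⟩) := by
  have hpsd : (Mᵀ * M).PosSemidef := by
    rw [← Matrix.conjTranspose_eq_transpose_of_trivial]
    exact Matrix.posSemidef_conjTranspose_mul_self M
  have hnn : ∀ i, 0 ≤ h.eigenvalues i := fun i => hpsd.eigenvalues_nonneg i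
  have hsort : (List.ofFn h.eigenvalues).insertionSort (· ≤ ·)
      = List.ofFn (h.eigenvalues ∘ Tuple.sort h.eigenvalues) := by
    refine List.Perm.eq_of_pairwise'
      (List.pairwise_insertionSort _ _)
      ((Tuple.monotone_sort h.eigenvalues).sortedLE_ofFn.pairwise)
      ((List.perm_insertionSort _ _).trans
        (Equiv.Perm.ofFn_comp_perm (Tuple.sort h.eigenvalues) h.eigenvalues).symm)
  have hsv : svals M j = Real.sqrt
      ((((List.ofFn h.eigenvalues).insertionSort (· ≤ ·)).reverse).getD (j - 1) 0) := rfl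
  rw [hsv, hsort]
  have hlen : (List.ofFn (h.eigenvalues ∘ Tuple.sort h.eigenvalues)).length = q := by simp
  have hj1 : j - 1 < ((List.ofFn (h.eigenvalues ∘ Tuple.sort h.eigenvalues)).reverse).length := by
    simp; omega
  rw [List.getD_eq_getElem _ _ hj1, List.getElem_reverse]
  have : (List.ofFn (h.eigenvalues ∘ Tuple.sort h.eigenvalues)).length - 1 - (j - 1) = q - j := by
    simp; omega
  simp only [this]
  rw [List.getElem_ofFn]
  exact Real.sq_sqrt (hnn _)

lemma eig_tail_zero {p q : ℕ} (M : Matrix (Fin p) (Fin q) ℝ) (h : (Mᵀ * M).IsHermitian)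
    (i : ℕ) (hi : i + p < q) :
    h.eigenvalues (Tuple.sort h.eigenvalues ⟨i, by omega⟩) = 0 := by
  have hpsd : (Mᵀ * M).PosSemidef := by
    rw [← Matrix.conjTranspose_eq_transpose_of_trivial]
    exact Matrix.posSemidef_conjTranspose_mul_self M
  have hnn : ∀ k, 0 ≤ h.eigenvalues k := fun k => hpsd.eigenvalues_nonneg k
  have hmono := Tuple.monotone_sort h.eigenvalues
  by_contra hne
  have hpos : 0 < h.eigenvalues (Tuple.sort h.eigenvalues ⟨i, by omega⟩) :=
    lt_of_le_of_ne (hnn _) (Ne.symm hne)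
  -- injection from Fin (q - i) into nonzero eigenvalue indices
  have hcard : q - i ≤ Fintype.card {k // h.eigenvalues k ≠ 0} := by
    have hinj : Function.Injective (fun k : Fin (q - i) =>
        (⟨Tuple.sort h.eigenvalues ⟨i + k.1, by omega⟩, by
          have hle : h.eigenvalues (Tuple.sort h.eigenvalues ⟨i, by omega⟩)
              ≤ h.eigenvalues (Tuple.sort h.eigenvalues ⟨i + k.1, by omega⟩) := by
            have : (⟨i, by omega⟩ : Fin q) ≤ ⟨i + k.1, by omega⟩ := by
              simp [Fin.le_def]
            exact hmono this
          exact ne_of_gt (lt_of_lt_of_le hpos hle)⟩ : {k // h.eigenvalues k ≠ 0})) := by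
      intro a b hab
      have := congrArg (fun z => ((Tuple.sort h.eigenvalues).symm z.1 : Fin q).1) hab
      simp at this
      exact Fin.ext (by omega)
    calc q - i = Fintype.card (Fin (q - i)) := (Fintype.card_fin _).symm
      _ ≤ _ := Fintype.card_le_of_injective _ hinj
  have hrank : Fintype.card {k // h.eigenvalues k ≠ 0} ≤ p := by
    rw [← h.rank_eq_card_non_zero_eigs, Matrix.rank_transpose_mul_self]
    exact le_trans (Matrix.rank_le_card_height M) (le_of_eq (Fintype.card_fin _))
  omega

lemma sum_tail_le (A N LB : ℕ) (G : ℕ → ℝ)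
    (hz : ∀ i, i + LB < A → G i = 0) :
    ∑ i ∈ Finset.range (A - N), G i ≤ ∑ j ∈ Finset.Icc (N + 1) (min LB A), G (A - j) := by
  set m := min LB A with hm
  have hRHS : ∑ j ∈ Finset.Icc (N + 1) m, G (A - j)
      = ∑ i ∈ Finset.Ico (A - m) (A - N), G i := by
    refine Finset.sum_bij' (fun j _ => A - j) (fun i _ => A - i) ?_ ?_ ?_ ?_ ?_
    · intro j hj
      simp only [Finset.mem_Icc] at hj
      simp only [Finset.mem_Ico]
      omega
    · intro i hi
      simp only [Finset.mem_Ico] at hi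
      simp only [Finset.mem_Icc]
      omega
    · intro j hj
      simp only [Finset.mem_Icc] at hj
      show A - (A - j) = j
      omega
    · intro i hi
      simp only [Finset.mem_Ico] at hi
      show A - (A - i) = i
      omega
    · intro j hj
      rfl
  rw [hRHS]
  rw [← Finset.sum_filter_add_sum_filter_not (Finset.range (A - N)) (fun i => A - m ≤ i)]
  have h1 : (Finset.range (A - N)).filter (fun i => A - m ≤ i) = Finset.Ico (A - m) (A - N) := by
    ext i
    simp only [Finset.mem_filter, Finset.mem_range, Finset.mem_Ico]
    omega
  have h2 : ∑ i ∈ (Finset.range (A - N)).filter (fun i => ¬ (A - m ≤ i)), G i = 0 := by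
    refine Finset.sum_eq_zero fun i hi => ?_
    simp only [Finset.mem_filter, Finset.mem_range, not_le] at hi
    exact hz i (by omega)
  rw [h1, h2, add_zero]

lemma frob_transfer (L A B : ℕ) (V : Matrix (Fin L) (Fin (A * B)) ℝ) :
    ∑ ℓ, ∑ c, (V ℓ c) ^ 2 = ∑ r, ∑ a, (rearrange L A B V r a) ^ 2 := by
  have h1 : ∑ r, ∑ a, (rearrange L A B V r a) ^ 2
      = ∑ pr : Fin L × Fin B, ∑ a, (V pr.1 (pairIdx a pr.2)) ^ 2 := by
    rw [← Equiv.sum_comp (finProdFinEquiv (m := L) (n := B))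
      (fun r => ∑ a, (rearrange L A B V r a) ^ 2)]
    refine Finset.sum_congr rfl fun pr _ => ?_
    simp [rearrange]
  rw [h1, Fintype.sum_prod_type]
  have h2 : ∀ ℓ : Fin L, ∑ c, (V ℓ c) ^ 2 = ∑ pa : Fin A × Fin B, (V ℓ (pairIdx pa.1 pa.2)) ^ 2 := by
    intro ℓ
    exact (Equiv.sum_comp (finProdFinEquiv (m := A) (n := B)) (fun c => (V ℓ c) ^ 2)).symm
  simp only [h2, Fintype.sum_prod_type]
  exact Finset.sum_congr rfl fun ℓ _ => Finset.sum_comm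

lemma sum_pad {q : ℕ} (N : ℕ) (F : Fin q → ℝ) :
    ∑ i : Fin N, (if hi : q - N + i.1 < q then F ⟨q - N + i.1, hi⟩ else 0)
      = ∑ k ∈ Finset.univ.filter (fun k : Fin q => q - N ≤ k.1), F k := by
  rw [← Finset.sum_filter_add_sum_filter_not Finset.univ (fun i : Fin N => q - N + i.1 < q)]
  have h2 : ∑ i ∈ Finset.univ.filter (fun i : Fin N => ¬ (q - N + i.1 < q)),
      (if hi : q - N + i.1 < q then F ⟨q - N + i.1, hi⟩ else 0) = 0 := by
    refine Finset.sum_eq_zero fun i hi => ?_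
    simp only [Finset.mem_filter] at hi
    rw [dif_neg hi.2]
  rw [h2, add_zero]
  refine Finset.sum_bij' (fun i hi => (⟨q - N + i.1, by
      simp only [Finset.mem_filter] at hi; exact hi.2⟩ : Fin q))
    (fun k hk => (⟨k.1 - (q - N), by
      simp only [Finset.mem_filter] at hk
      have := k.isLt
      omega⟩ : Fin N)) ?_ ?_ ?_ ?_ ?_
  · intro i hi
    simp only [Finset.mem_filter, Finset.mem_univ, true_and] at hi ⊢
    omega
  · intro k hk
    simp only [Finset.mem_filter, Finset.mem_univ, true_and] at hk ⊢
    have := k.isLt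
    omega
  · intro i hi
    exact Fin.ext (by simp)
  · intro k hk
    simp only [Finset.mem_filter, Finset.mem_univ, true_and] at hk
    exact Fin.ext (by simp; omega)
  · intro i hi
    simp only [Finset.mem_filter, Finset.mem_univ, true_and] at hi
    rw [dif_pos hi]
/-- Universal Approximation under Kronecker Constraints: if the network map
is `K`-Lipschitz in its weights uniformly over inputs and the number of templates `N`
satisfies `Σ_{j=N+1}^{min(L·B,A)} σ_j(R(W))² ≤ ε²/K²`, then some `N`-term Kronecker
reconstruction `W_⋆` gives `sup_x ‖f(x; W_⋆) − f(x; W)‖ ≤ ε`. -/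
theorem universal_approximation_kron (L A B N : ℕ) (hL : 0 < L) (hA : 0 < A) (hB : 0 < B)
    (hN : 0 < N) {X : Type*} {m : ℕ}
    (f : Matrix (Fin L) (Fin (A * B)) ℝ → X → EuclideanSpace ℝ (Fin m))
    (K : ℝ) (hK : 0 < K)
    (hLip : ∀ (W₁ W₂ : Matrix (Fin L) (Fin (A * B)) ℝ) (x : X),
      ‖f W₁ x - f W₂ x‖ ≤ K * frobNorm (W₁ - W₂))
    (W : Matrix (Fin L) (Fin (A * B)) ℝ) (ε : ℝ) (hε : 0 < ε)
    (hsv : ∑ j ∈ Finset.Icc (N + 1) (min (L * B) A), svals (rearrange L A B W) j ^ 2 ≤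
      ε ^ 2 / K ^ 2) :
    ∃ (T : Fin N → Matrix (Fin 1) (Fin A) ℝ) (S : Fin N → Matrix (Fin L) (Fin B) ℝ),
      ∀ x : X, ‖f (∑ i, kron (T i) (S i)) x - f W x‖ ≤ ε := by
  classical
  set M : Matrix (Fin (L * B)) (Fin A) ℝ := rearrange L A B W with hMdef
  have h : (Mᵀ * M).IsHermitian := by
    rw [← Matrix.conjTranspose_eq_transpose_of_trivial]
    exact Matrix.isHermitian_conjTranspose_mul_self M
  set σ := Tuple.sort h.eigenvalues with hσdef
  let T : Fin N → Matrix (Fin 1) (Fin A) ℝ := fun i =>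
    if hi : A - N + i.1 < A then
      (fun _ a => (h.eigenvectorBasis (σ ⟨A - N + i.1, hi⟩)) a) else 0
  let S : Fin N → Matrix (Fin L) (Fin B) ℝ := fun i =>
    if hi : A - N + i.1 < A then
      (fun ℓ b => (M *ᵥ ⇑(h.eigenvectorBasis (σ ⟨A - N + i.1, hi⟩))) (finProdFinEquiv (ℓ, b)))
    else 0
  refine ⟨T, S, fun x => ?_⟩
  set topK : Finset (Fin A) := Finset.univ.filter (fun k : Fin A => A - N ≤ k.1) with htopK
  set s : Finset (Fin A) := topK.map σ.toEmbedding with hsdef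
  set Wst : Matrix (Fin L) (Fin (A * B)) ℝ := ∑ i, kron (T i) (S i) with hWst
  -- entrywise formula for the rearranged reconstruction
  have hRWst : ∀ r a, rearrange L A B Wst r a
      = ∑ j ∈ s, (M *ᵥ ⇑(h.eigenvectorBasis j)) r * (h.eigenvectorBasis j) a := by
    intro r a
    have e1 : rearrange L A B Wst r a = ∑ i : Fin N,
        (kron (T i) (S i)) (finProdFinEquiv.symm r).1 (pairIdx a (finProdFinEquiv.symm r).2) := by
      simp [rearrange, Wst, Matrix.sum_apply]
    rw [e1]
    have e2 : ∀ i : Fin N,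
        (kron (T i) (S i)) (finProdFinEquiv.symm r).1 (pairIdx a (finProdFinEquiv.symm r).2)
        = (if hi : A - N + i.1 < A then
            (M *ᵥ ⇑(h.eigenvectorBasis (σ ⟨A - N + i.1, hi⟩))) r
              * (h.eigenvectorBasis (σ ⟨A - N + i.1, hi⟩)) a else 0) := by
      intro i
      by_cases hi : A - N + i.1 < A
      · rw [dif_pos hi]
        simp only [kron, T, S, dif_pos hi, pairIdx, Equiv.symm_apply_apply]
        rw [mul_comm]
        congr 1
        congr 1
        have hS : S i = fun ℓ b =>
            (M *ᵥ ⇑(h.eigenvectorBasis (σ ⟨A - N + i.1, hi⟩))) (finProdFinEquiv (ℓ, b)) :=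
          dif_pos hi
        exact (congrFun (congrFun hS _) _).trans (by simp only [Prod.mk.eta, Equiv.apply_symm_apply])
        have hT : T i = fun _ a => (h.eigenvectorBasis (σ ⟨A - N + i.1, hi⟩)) a := dif_pos hi
        exact congrFun (congrFun hT _) _
      · rw [dif_neg hi]
        simp [kron, T, S, dif_neg hi]
        left
        have hT : T i = 0 := dif_neg hi
        exact congrFun (congrFun hT _) _
    simp only [e2]
    rw [sum_pad (q := A) N
      (fun k => (M *ᵥ ⇑(h.eigenvectorBasis (σ k))) r * (h.eigenvectorBasis (σ k)) a)]
    rw [hsdef, Finset.sum_map]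
    rfl
  -- Frobenius norm squared of the error
  have hfr : ∑ ℓ, ∑ c, ((Wst - W) ℓ c) ^ 2 = ∑ j ∈ sᶜ, h.eigenvalues j := by
    rw [frob_transfer]
    have e3 : ∀ (r : Fin (L * B)) (a : Fin A), (rearrange L A B (Wst - W) r a) ^ 2
        = (M r a
            - ∑ j ∈ s, (M *ᵥ ⇑(h.eigenvectorBasis j)) r * (h.eigenvectorBasis j) a) ^ 2 := by
      intro r a
      have e4 : rearrange L A B (Wst - W) r a = rearrange L A B Wst r a - M r a := by
        simp [rearrange, Matrix.sub_apply, hMdef]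
      rw [e4, hRWst r a, ← neg_sub, neg_sq]
    simp only [e3]
    exact eckart M h s
  -- compare the eigenvalue tail with the singular-value hypothesis
  have hsc : sᶜ = (topKᶜ).map σ.toEmbedding := by
    ext j
    simp [hsdef, htopK, Finset.mem_map_equiv]
  let G : ℕ → ℝ := fun k => if hk : k < A then h.eigenvalues (σ ⟨k, hk⟩) else 0
  have hGz : ∀ i, i + L * B < A → G i = 0 := by
    intro i hi
    simp only [G, dif_pos (show i < A by omega)]
    exact eig_tail_zero M h i hi
  have htopKc : ∑ k ∈ topKᶜ, h.eigenvalues (σ k) = ∑ i ∈ Finset.range (A - N), G i := by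
    refine Finset.sum_bij' (fun k _ => k.1)
      (fun i hi => (⟨i, by simp only [Finset.mem_range] at hi; omega⟩ : Fin A)) ?_ ?_ ?_ ?_ ?_
    · intro k hk
      simp only [htopK, Finset.mem_compl, Finset.mem_filter, Finset.mem_univ, true_and,
        not_le] at hk
      simpa [Finset.mem_range] using hk
    · intro i hi
      simp only [Finset.mem_range] at hi
      simp only [htopK, Finset.mem_compl, Finset.mem_filter, Finset.mem_univ, true_and, not_le]
      omega
    · intro k _
      exact Fin.ext rfl
    · intro i _
      rfl
    · intro k hk
      simp only [G, dif_pos k.isLt]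
  have hhyp : ∑ j ∈ Finset.Icc (N + 1) (min (L * B) A), svals M j ^ 2
      = ∑ j ∈ Finset.Icc (N + 1) (min (L * B) A), G (A - j) := by
    refine Finset.sum_congr rfl fun j hj => ?_
    simp only [Finset.mem_Icc] at hj
    have h1 : 1 ≤ j := by omega
    have h2 : j ≤ A := by omega
    rw [svals_sq_eq M h j h1 h2]
    simp only [G]
    rw [dif_pos (show A - j < A by omega)]
  have hle : ∑ j ∈ sᶜ, h.eigenvalues j ≤ ε ^ 2 / K ^ 2 := by
    rw [hsc, Finset.sum_map]
    calc ∑ k ∈ topKᶜ, h.eigenvalues (σ.toEmbedding k)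
        = ∑ i ∈ Finset.range (A - N), G i := htopKc
      _ ≤ ∑ j ∈ Finset.Icc (N + 1) (min (L * B) A), G (A - j) :=
          sum_tail_le A N (L * B) G hGz
      _ = ∑ j ∈ Finset.Icc (N + 1) (min (L * B) A), svals M j ^ 2 := hhyp.symm
      _ ≤ ε ^ 2 / K ^ 2 := hsv
  -- conclude
  have hfrob : frobNorm (Wst - W) ≤ ε / K := by
    have hX : ∑ ℓ, ∑ c, ((Wst - W) ℓ c) ^ 2 ≤ ε ^ 2 / K ^ 2 := le_trans (le_of_eq hfr) hle
    calc frobNorm (Wst - W) = Real.sqrt (∑ ℓ, ∑ c, ((Wst - W) ℓ c) ^ 2) := rfl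
      _ ≤ Real.sqrt (ε ^ 2 / K ^ 2) := Real.sqrt_le_sqrt hX
      _ = ε / K := by rw [← div_pow, Real.sqrt_sq (le_of_lt (div_pos hε hK))]
  calc ‖f Wst x - f W x‖ ≤ K * frobNorm (Wst - W) := hLip _ _ x
    _ ≤ K * (ε / K) := mul_le_mul_of_nonneg_left hfrob (le_of_lt hK)
    _ = ε := by field_simp
end
end

section
/- (Unconditional approximation bound for Lipschitz networks) Let f be a network map assigning to each weight matrix W' ∈ ℝ^{L×P} a function f(·; W') : X → ℝ^{m} on a set X, and suppose that for all W₁, W₂ ∈ ℝ^{L×P} and all x ∈ X, ‖f(x; W₁) − f(x; W₂)‖ ≤ K·‖W₁ − W₂‖_F for some constant K > 0. Then for every W ∈ ℝ^{L×P} and every N ≥ 1, there exist templates T₁, …, T_N ∈ ℝ^{1×A} and scalers S₁, …, S_N ∈ ℝ^{L×B} such that, setting W_⋆ = Σ_{i=1}^{N} T_i ⊗ S_i, one has sup_{x ∈ X} ‖f(x; W_⋆) − f(x; W)‖ ≤ K · (Σ_{j=N+1}^{min(L·B, A)} σ_j(R(W))²)^{1/2}. -/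
open Matrix

noncomputable section

lemma sorted_eq {q : ℕ} (lam : Fin q → ℝ) :
    (List.ofFn lam).insertionSort (· ≤ ·) = List.ofFn (lam ∘ Tuple.sort lam) :=
  List.Perm.eq_of_pairwise'
    (List.pairwise_insertionSort _ _)
    (List.sortedLE_iff_pairwise.mp (List.sortedLE_ofFn_iff.mpr (Tuple.monotone_sort lam)))
    ((List.perm_insertionSort _ _).trans ((Tuple.sort lam).ofFn_comp_perm lam).symm)

lemma rev_getD {q : ℕ} (g : Fin q → ℝ) (k : ℕ) (hk : k < q) :
    ((List.ofFn g).reverse).getD k 0 = g ⟨q - 1 - k, by omega⟩ := by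
  rw [List.getD_eq_getElem _ _ (by simpa using hk)]
  rw [List.getElem_reverse]
  simp [List.getElem_ofFn]

lemma eckartYoung (p q N : ℕ) (hp : 0 < p) (hq : 0 < q) (hN : 1 ≤ N)
    (M : Matrix (Fin p) (Fin q) ℝ) :
    ∃ (u : Fin N → Fin p → ℝ) (v : Fin N → Fin q → ℝ),
      ∑ r, ∑ a, (M r a - ∑ i, u i r * v i a) ^ 2
        = ∑ j ∈ Finset.Icc (N + 1) (min p q), svals M j ^ 2 := by
  classical
  have hG : (Mᵀ * M).IsHermitian := by
    rw [← Matrix.conjTranspose_eq_transpose_of_trivial]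
    exact Matrix.isHermitian_conjTranspose_mul_self M
  set lam := hG.eigenvalues with hlamdef
  set w : Fin q → Fin q → ℝ := fun j => ⇑(hG.eigenvectorBasis j) with hwdef
  have hort : ∀ j j', ∑ a, w j a * w j' a = if j = j' then 1 else 0 := by
    intro j j'
    have h := orthonormal_iff_ite.mp hG.eigenvectorBasis.orthonormal j j'
    simpa [PiLp.inner_apply, RCLike.inner_apply, mul_comm] using h
  have hcomp : ∀ c a, ∑ j, w j c * w j a = if c = a then 1 else 0 := by
    intro c a
    set V : Matrix (Fin q) (Fin q) ℝ := Matrix.of w with hV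
    have h1 : V * Vᵀ = 1 := by
      ext j j'
      simp only [Matrix.mul_apply, Matrix.transpose_apply, Matrix.one_apply, hV, Matrix.of_apply]
      exact hort j j'
    have h2 : Vᵀ * V = 1 := mul_eq_one_comm.mp h1
    have := congrFun (congrFun h2 c) a
    simpa [Matrix.mul_apply, Matrix.one_apply, mul_comm, hV] using this
  have heig : ∀ j, (Mᵀ * M) *ᵥ w j = lam j • w j := hG.mulVec_eigenvectorBasis
  have hnn : ∀ j, 0 ≤ lam j := by
    intro j
    have h := Matrix.posSemidef_conjTranspose_mul_self M
    rw [Matrix.conjTranspose_eq_transpose_of_trivial] at h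
    exact h.eigenvalues_nonneg j
  set σ := Tuple.sort lam with hσdef
  have hmono : Monotone (lam ∘ σ) := Tuple.monotone_sort lam
  -- singular values in terms of sorted eigenvalues
  have hsv : ∀ (j : ℕ) (h1 : N + 1 ≤ j) (h2 : j ≤ q),
      svals M j ^ 2 = lam (σ ⟨q - j, by omega⟩) := by
    intro j h1 h2
    have hj1 : j - 1 < q := by omega
    have : svals M j = Real.sqrt ((lam ∘ σ) ⟨q - 1 - (j - 1), by omega⟩) := by
      unfold svals
      rw [sorted_eq, rev_getD _ (j - 1) hj1]
    rw [this]
    have hidx : (⟨q - 1 - (j - 1), by omega⟩ : Fin q) = ⟨q - j, by omega⟩ := by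
      apply Fin.ext; simp; omega
    rw [hidx, Function.comp_apply, Real.sq_sqrt (hnn _)]
  -- rank bound: the smallest q - p sorted eigenvalues vanish
  have hrank : ∀ k : Fin q, (k : ℕ) < q - p → lam (σ k) = 0 := by
    intro k hk
    by_contra hne
    have hpos : ∀ k' : Fin q, k ≤ k' → lam (σ k') ≠ 0 := by
      intro k' hk'
      have h1 := hmono hk'
      have h2 := (hnn (σ k)).lt_of_ne (Ne.symm hne)
      simp only [Function.comp_apply] at h1
      intro h0
      rw [h0] at h1
      linarith
    have hinj : Function.Injective
        (fun k' : {k' : Fin q // k ≤ k'} => (⟨σ k', hpos _ k'.2⟩ : {i // lam i ≠ 0})) := by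
      intro x y hxy
      simp only [Subtype.mk.injEq] at hxy
      exact Subtype.ext (σ.injective hxy)
    have hcard := Fintype.card_le_of_injective _ hinj
    have h1 : Fintype.card {k' : Fin q // k ≤ k'} = q - k := by
      rw [Fintype.card_subtype,
        show (Finset.filter (fun x => k ≤ x) Finset.univ) = Finset.Ici k by ext x; simp]
      exact Fin.card_Ici k
    have h2 : Fintype.card {i // lam i ≠ 0} = (Mᵀ * M).rank :=
      hG.rank_eq_card_non_zero_eigs.symm
    have h3 : (Mᵀ * M).rank = M.rank := Matrix.rank_transpose_mul_self M
    have h4 : M.rank ≤ p := Matrix.rank_le_height M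
    omega
  -- chosen subsets
  set K : Finset (Fin q) := Finset.univ.filter (fun k : Fin q => (k : ℕ) < q - N) with hKdef
  set Sfin : Finset (Fin q) := (Finset.univ.filter fun k : Fin q => q - N ≤ (k : ℕ)).image σ
    with hSdef
  have hScompl : Sfinᶜ = K.image σ := by
    ext j
    simp only [hSdef, hKdef, Finset.mem_compl, Finset.mem_image, Finset.mem_filter,
      Finset.mem_univ, true_and]
    constructor
    · intro h
      refine ⟨σ.symm j, ?_, σ.apply_symm_apply j⟩
      by_contra hc
      exact h ⟨σ.symm j, by omega, σ.apply_symm_apply j⟩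
    · rintro ⟨k, hk, rfl⟩ ⟨k', hk', hkk'⟩
      have := σ.injective hkk'
      subst this
      omega
  refine ⟨fun i => if h : (i : ℕ) < q then M *ᵥ w (σ ⟨q - 1 - (i : ℕ), by omega⟩) else 0,
          fun i => if h : (i : ℕ) < q then w (σ ⟨q - 1 - (i : ℕ), by omega⟩) else 0, ?_⟩
  have hSsum : ∀ r a, (∑ i : Fin N,
      (if h : (i : ℕ) < q then M *ᵥ w (σ ⟨q - 1 - (i : ℕ), by omega⟩) else 0) r *
      (if h : (i : ℕ) < q then w (σ ⟨q - 1 - (i : ℕ), by omega⟩) else 0) a)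
      = ∑ j ∈ Sfin, (M *ᵥ w j) r * w j a := by
    intro r a
    rw [hSdef, Finset.sum_image (fun x _ y _ h => σ.injective h)]
    rw [← Finset.sum_filter_of_ne (p := fun i : Fin N => (i : ℕ) < q)
      (fun x _ hx => by by_contra hc; simp [dif_neg hc] at hx)]
    refine Finset.sum_bij' (i := fun (i : Fin N) (hi : i ∈ Finset.univ.filter _) =>
        (⟨q - 1 - (i : ℕ), by have := (Finset.mem_filter.mp hi).2; omega⟩ : Fin q))
      (j := fun (k : Fin q) (hk : k ∈ Finset.univ.filter _) =>
        (⟨q - 1 - (k : ℕ), by have := (Finset.mem_filter.mp hk).2; omega⟩ : Fin N))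
      ?_ ?_ ?_ ?_ ?_
    · intro i hi
      have h2 := (Finset.mem_filter.mp hi).2
      simp only [Finset.mem_filter, Finset.mem_univ, true_and]
      omega
    · intro k hk
      have h2 := (Finset.mem_filter.mp hk).2
      simp only [Finset.mem_filter, Finset.mem_univ, true_and]
      have := k.isLt
      omega
    · intro i hi
      have h2 := (Finset.mem_filter.mp hi).2
      apply Fin.ext
      simp only []
      omega
    · intro k hk
      have h2 := (Finset.mem_filter.mp hk).2
      have := k.isLt
      apply Fin.ext
      simp only []
      omega
    · intro i hi
      have h2 := (Finset.mem_filter.mp hi).2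
      rw [dif_pos h2, dif_pos h2]
  have hfull : ∀ r a, ∑ j : Fin q, (M *ᵥ w j) r * w j a = M r a := by
    intro r a
    simp only [Matrix.mulVec, dotProduct]
    calc ∑ j, (∑ c, M r c * w j c) * w j a
        = ∑ j, ∑ c, M r c * (w j c * w j a) := by
          refine Finset.sum_congr rfl fun j _ => ?_
          rw [Finset.sum_mul]
          exact Finset.sum_congr rfl fun c _ => by ring
      _ = ∑ c, M r c * ∑ j, w j c * w j a := by
          rw [Finset.sum_comm]
          exact Finset.sum_congr rfl fun c _ => (Finset.mul_sum _ _ _).symm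
      _ = M r a := by
          simp only [hcomp, mul_ite, mul_one, mul_zero]
          rw [Finset.sum_ite_eq' Finset.univ a (fun c => M r c)]
          simp
  have hc : ∀ j, ∑ r, ((M *ᵥ w j) r) ^ 2 = lam j := by
    intro j
    have h1 : Mᵀ *ᵥ (M *ᵥ w j) = lam j • w j := by
      rw [Matrix.mulVec_mulVec]
      exact heig j
    have hone : ∑ a, w j a * w j a = 1 := by
      have := hort j j
      rwa [if_pos rfl] at this
    calc ∑ r, ((M *ᵥ w j) r) ^ 2
        = (M *ᵥ w j) ⬝ᵥ (M *ᵥ w j) := by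
          simp [dotProduct, pow_two]
      _ = ((M *ᵥ w j) ᵥ* M) ⬝ᵥ w j := Matrix.dotProduct_mulVec _ _ _
      _ = (Mᵀ *ᵥ (M *ᵥ w j)) ⬝ᵥ w j := by rw [Matrix.mulVec_transpose]
      _ = (lam j • w j) ⬝ᵥ w j := by rw [h1]
      _ = lam j := by
          simp only [dotProduct, Pi.smul_apply, smul_eq_mul, mul_assoc,
            ← Finset.mul_sum]
          rw [hone, mul_one]
  have hfrob : ∑ r, ∑ a, (∑ j ∈ Sfinᶜ, (M *ᵥ w j) r * w j a) ^ 2 = ∑ j ∈ Sfinᶜ, lam j := by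
    have hra : ∀ r, ∑ a, (∑ j ∈ Sfinᶜ, (M *ᵥ w j) r * w j a) ^ 2
        = ∑ j ∈ Sfinᶜ, ((M *ᵥ w j) r) ^ 2 := by
      intro r
      calc ∑ a, (∑ j ∈ Sfinᶜ, (M *ᵥ w j) r * w j a) ^ 2
          = ∑ a, ∑ j ∈ Sfinᶜ, ∑ j' ∈ Sfinᶜ,
              ((M *ᵥ w j) r * (M *ᵥ w j') r) * (w j a * w j' a) := by
            refine Finset.sum_congr rfl fun a _ => ?_
            rw [pow_two, Finset.sum_mul_sum]
            exact Finset.sum_congr rfl fun j _ =>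
              Finset.sum_congr rfl fun j' _ => by ring
        _ = ∑ j ∈ Sfinᶜ, ∑ j' ∈ Sfinᶜ,
              ((M *ᵥ w j) r * (M *ᵥ w j') r) * ∑ a, w j a * w j' a := by
            rw [Finset.sum_comm]
            refine Finset.sum_congr rfl fun j _ => ?_
            rw [Finset.sum_comm]
            exact Finset.sum_congr rfl fun j' _ => (Finset.mul_sum _ _ _).symm
        _ = ∑ j ∈ Sfinᶜ, ((M *ᵥ w j) r) ^ 2 := by
            refine Finset.sum_congr rfl fun j hj => ?_
            simp only [hort, mul_ite, mul_one, mul_zero]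
            rw [Finset.sum_ite_eq]
            rw [if_pos hj, pow_two]
    calc ∑ r, ∑ a, (∑ j ∈ Sfinᶜ, (M *ᵥ w j) r * w j a) ^ 2
        = ∑ r, ∑ j ∈ Sfinᶜ, ((M *ᵥ w j) r) ^ 2 := Finset.sum_congr rfl fun r _ => hra r
      _ = ∑ j ∈ Sfinᶜ, ∑ r, ((M *ᵥ w j) r) ^ 2 := Finset.sum_comm
      _ = ∑ j ∈ Sfinᶜ, lam j := Finset.sum_congr rfl fun j _ => hc j
  calc ∑ r, ∑ a, (M r a - ∑ i : Fin N,
        (if h : (i : ℕ) < q then M *ᵥ w (σ ⟨q - 1 - (i : ℕ), by omega⟩) else 0) r *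
        (if h : (i : ℕ) < q then w (σ ⟨q - 1 - (i : ℕ), by omega⟩) else 0) a) ^ 2
      = ∑ r, ∑ a, (∑ j ∈ Sfinᶜ, (M *ᵥ w j) r * w j a) ^ 2 := by
        refine Finset.sum_congr rfl fun r _ => Finset.sum_congr rfl fun a _ => ?_
        rw [hSsum r a]
        congr 1
        have h := Finset.sum_add_sum_compl Sfin (fun j => (M *ᵥ w j) r * w j a)
        rw [hfull r a] at h
        linarith
    _ = ∑ j ∈ Sfinᶜ, lam j := hfrob
    _ = ∑ k ∈ K, lam (σ k) := by
        rw [hScompl, Finset.sum_image (fun x _ y _ h => σ.injective h)]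
    _ = ∑ j ∈ Finset.Icc (N + 1) q, svals M j ^ 2 := by
        refine Finset.sum_bij' (i := fun (k : Fin q) (hk : k ∈ K) => q - (k : ℕ))
          (j := fun (jn : ℕ) (hj : jn ∈ Finset.Icc (N + 1) q) => (⟨q - jn, by
            have := Finset.mem_Icc.mp hj; omega⟩ : Fin q)) ?_ ?_ ?_ ?_ ?_
        · intro k hk
          have h2 : (k : ℕ) < q - N := (Finset.mem_filter.mp hk).2
          simp only [Finset.mem_Icc]
          omega
        · intro jn hj
          have h2 := Finset.mem_Icc.mp hj
          simp only [hKdef, Finset.mem_filter, Finset.mem_univ, true_and]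
          omega
        · intro k hk
          have h2 : (k : ℕ) < q - N := (Finset.mem_filter.mp hk).2
          have := k.isLt
          apply Fin.ext
          show q - (q - (k : ℕ)) = (k : ℕ)
          omega
        · intro jn hj
          have h2 := Finset.mem_Icc.mp hj
          show q - (q - jn) = jn
          omega
        · intro k hk
          have h2 : (k : ℕ) < q - N := (Finset.mem_filter.mp hk).2
          have h1 := hsv (q - (k : ℕ)) (by omega) (by omega)
          rw [h1]
          congr 2
          apply Fin.ext
          show (k : ℕ) = q - (q - (k : ℕ))
          have := k.isLt
          omega
    _ = ∑ j ∈ Finset.Icc (N + 1) (min p q), svals M j ^ 2 := by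
        refine (Finset.sum_subset (Finset.Icc_subset_Icc_right (min_le_right p q)) ?_).symm
        intro x hx hnx
        have h1 := Finset.mem_Icc.mp hx
        have h2 : min p q < x := by
          simp only [Finset.mem_Icc] at hnx
          omega
        rw [hsv x (by omega) h1.2]
        apply hrank
        show q - x < q - p
        omega

/-- Unconditional approximation bound for Lipschitz networks: for every `W`
and every `N ≥ 1`, some `N`-term Kronecker reconstruction `W_⋆` satisfies
`sup_x ‖f(x; W_⋆) − f(x; W)‖ ≤ K · (Σ_{j=N+1}^{min(L·B,A)} σ_j(R(W))²)^{1/2}`. -/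
theorem kron_approx_bound_lipschitz (L A B N : ℕ) (hL : 0 < L) (hA : 0 < A) (hB : 0 < B)
    (hN : 1 ≤ N) {X : Type*} {m : ℕ}
    (f : Matrix (Fin L) (Fin (A * B)) ℝ → X → EuclideanSpace ℝ (Fin m))
    (K : ℝ) (hK : 0 < K)
    (hLip : ∀ (W₁ W₂ : Matrix (Fin L) (Fin (A * B)) ℝ) (x : X),
      ‖f W₁ x - f W₂ x‖ ≤ K * frobNorm (W₁ - W₂))
    (W : Matrix (Fin L) (Fin (A * B)) ℝ) :
    ∃ (T : Fin N → Matrix (Fin 1) (Fin A) ℝ) (S : Fin N → Matrix (Fin L) (Fin B) ℝ),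
      ∀ x : X, ‖f (∑ i, kron (T i) (S i)) x - f W x‖ ≤
        K * Real.sqrt
          (∑ j ∈ Finset.Icc (N + 1) (min (L * B) A), svals (rearrange L A B W) j ^ 2) := by
  obtain ⟨u, v, huv⟩ := eckartYoung (L * B) A N (by positivity) hA hN (rearrange L A B W)
  refine ⟨fun i => Matrix.of fun _ a => v i a,
    fun i => Matrix.of fun ℓ b => u i (pairIdx ℓ b), ?_⟩
  intro x
  refine le_trans (hLip _ W x) ?_
  have hfn : frobNorm ((∑ i, kron (Matrix.of fun _ a => v i a)
        (Matrix.of fun ℓ b => u i (pairIdx ℓ b))) - W)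
      = Real.sqrt (∑ r, ∑ a, (rearrange L A B W r a - ∑ i, u i r * v i a) ^ 2) := by
    unfold frobNorm
    congr 1
    have hR : ∀ F : Fin (L * B) → ℝ, ∑ r, F r = ∑ ℓ : Fin L, ∑ b : Fin B, F (pairIdx ℓ b) := by
      intro F
      rw [← Equiv.sum_comp (finProdFinEquiv : Fin L × Fin B ≃ Fin (L * B)) F,
        Fintype.sum_prod_type]
      rfl
    have hC : ∀ F : Fin (A * B) → ℝ, ∑ c, F c = ∑ a : Fin A, ∑ b : Fin B, F (pairIdx a b) := by
      intro F
      rw [← Equiv.sum_comp (finProdFinEquiv : Fin A × Fin B ≃ Fin (A * B)) F,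
        Fintype.sum_prod_type]
      rfl
    rw [hR (fun r => ∑ a, (rearrange L A B W r a - ∑ i, u i r * v i a) ^ 2)]
    calc ∑ ℓ, ∑ c, (((∑ i, kron (Matrix.of fun _ a => v i a)
            (Matrix.of fun ℓ' b => u i (pairIdx ℓ' b))) - W) ℓ c) ^ 2
        = ∑ ℓ, ∑ a, ∑ b, (((∑ i, kron (Matrix.of fun _ a => v i a)
            (Matrix.of fun ℓ' b => u i (pairIdx ℓ' b))) - W) ℓ (pairIdx a b)) ^ 2 :=
          Finset.sum_congr rfl fun ℓ _ => hC _
      _ = ∑ ℓ, ∑ b, ∑ a, (rearrange L A B W (pairIdx ℓ b) a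
            - ∑ i, u i (pairIdx ℓ b) * v i a) ^ 2 := by
          refine Finset.sum_congr rfl fun ℓ _ => ?_
          rw [Finset.sum_comm]
          refine Finset.sum_congr rfl fun b _ => Finset.sum_congr rfl fun a _ => ?_
          simp only [Matrix.sub_apply, Matrix.sum_apply, kron, rearrange, pairIdx,
            Equiv.symm_apply_apply, Matrix.of_apply]
          have hmc : ∑ i : Fin N, v i a * u i (finProdFinEquiv (ℓ, b))
              = ∑ i : Fin N, u i (finProdFinEquiv (ℓ, b)) * v i a :=
            Finset.sum_congr rfl fun i _ => mul_comm _ _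
          rw [hmc]; ring
  rw [hfn, huv]
end
end
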